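/- arXiv:2207.09573 — 3 statements merged into one kernel-verified Lean document; each statement's English description precedes it below -/
import Mathlib

section
/- (Lemma, part (i)) Let $Y(x',x,\theta) := E_{R_\theta}(p_2 \mid p_1 = x_1)$, the sampling regression curve evaluated at the first coordinate $x_1$ of the new observation. Then for every $n \in \mathbb{N}$, the regression curve of $p_2$ on $p_1$ with respect to the posterior predictive distribution based on the first $n$ observations equals a conditional expectation under $\Pi_{\mathbb{N}}$: $E_{(R^*_{n,x'_{(n)}})^R}(p_2 \mid p_1 = x_1) = E_{\Pi_{\mathbb{N}}}\big(Y \,\big|\, (\pi'_{(n),\mathbb{N}}, \pi_{1,\mathbb{N}}) = (x'_{(n)}, x_1)\big)$, $\Pi_{\mathbb{N}}$-almost everywhere. -/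
open MeasureTheory ProbabilityTheory Filter
open scoped ENNReal

/-- The joint distribution `Π_m` of the sample (of shape `α`), a new observation and the
parameter: `Π_m(A' × A × T) = ∫_T R_θ(A) S_θ(A') dQ(θ)`. -/
noncomputable def PiM {Θ Ω₁ Ω₂ α : Type*} [MeasurableSpace Θ] [MeasurableSpace Ω₁]
    [MeasurableSpace Ω₂] [MeasurableSpace α]
    (Q : Measure Θ) (S : Kernel Θ α) (R : Kernel Θ (Ω₁ × Ω₂)) :
    Measure (α × (Ω₁ × Ω₂) × Θ) :=
  (Q ⊗ₘ (S ×ₖ R)).map fun p => (p.2.1, p.2.2, p.1)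

/-- `g` is (a version of) the regression curve of the second coordinate `p₂` on the first
coordinate `p₁` under the distribution `ν` on `Ω₁ × ℝ`, i.e. `g x₁ = E_ν(p₂ | p₁ = x₁)`. -/
def IsRegCurve {Ω₁ : Type*} [MeasurableSpace Ω₁] (ν : Measure (Ω₁ × ℝ)) (g : Ω₁ → ℝ) : Prop :=
  Integrable (fun x : Ω₁ × ℝ => x.2) ν ∧
  ∀ A₁ : Set Ω₁, MeasurableSet A₁ →
    ∫ x in Prod.fst ⁻¹' A₁, x.2 ∂ν = ∫ x in Prod.fst ⁻¹' A₁, g x.1 ∂ν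

/-- `post` is a posterior distribution for the prior `Q` and the sampling kernel `S`. -/
def IsPosterior {Θ α : Type*} [MeasurableSpace Θ] [MeasurableSpace α]
    (Q : Measure Θ) (S : Kernel Θ α) (post : Kernel α Θ) : Prop :=
  ∀ (A' : Set α) (T : Set Θ), MeasurableSet A' → MeasurableSet T →
    ∫⁻ θ in T, S θ A' ∂Q = ∫⁻ x' in A', post x' T ∂(Q.bind fun θ => S θ)

/- ### Auxiliary lemmas -/

lemma ofReal_norm_eq_coe_nnnorm {E : Type*} [SeminormedAddGroup E] (a : E) :
    ENNReal.ofReal ‖a‖ = ((‖a‖₊ : NNReal) : ℝ≥0∞) :=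
  ENNReal.ofReal_eq_coe_nnreal _

/-- Positive-part bound for a "regression curve"-type function. -/
lemma aux_pos {α : Type*} [MeasurableSpace α] {ν : Measure α} [IsFiniteMeasure ν]
    {G f : α → ℝ} (hG : Measurable G) (hf : Integrable f ν)
    (heq : ∀ k : ℕ, ∫ x in {x | 0 ≤ G x ∧ G x ≤ (k : ℝ)}, G x ∂ν
      = ∫ x in {x | 0 ≤ G x ∧ G x ≤ (k : ℝ)}, f x ∂ν) :
    ∫⁻ x, ENNReal.ofReal (G x) ∂ν ≤ ∫⁻ x, ‖f x‖₊ ∂ν := by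
  set S : ℕ → Set α := fun k => {x | 0 ≤ G x ∧ G x ≤ (k : ℝ)} with hS
  have hSm : ∀ k, MeasurableSet (S k) := fun k =>
    (measurableSet_le measurable_const hG).inter (measurableSet_le hG measurable_const)
  set F : ℕ → α → ℝ≥0∞ := fun k => (S k).indicator fun x => ENNReal.ofReal (G x) with hF
  have hFm : ∀ k, Measurable (F k) := fun k =>
    (hG.ennreal_ofReal).indicator (hSm k)
  have hFmono : Monotone F := by
    intro a b hab x
    by_cases hx : x ∈ S a
    · have hx' : x ∈ S b := ⟨hx.1, hx.2.trans (by exact_mod_cast Nat.cast_le.mpr hab)⟩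
      simp [F, hx, hx']
    · simp [F, hx]
  have hsup : ∀ x, (⨆ k, F k x) = ENNReal.ofReal (G x) := by
    intro x
    refine le_antisymm (iSup_le fun k => ?_) ?_
    · exact Set.indicator_le_self _ _ x
    · rcases le_or_gt 0 (G x) with h0 | h0
      · have hmem : x ∈ S ⌈G x⌉₊ := ⟨h0, Nat.le_ceil _⟩
        have : F ⌈G x⌉₊ x = ENNReal.ofReal (G x) := by simp [F, hmem]
        exact this ▸ le_iSup (fun k => F k x) ⌈G x⌉₊
      · simp [ENNReal.ofReal_eq_zero.mpr h0.le]
  have hlim : ∫⁻ x, ENNReal.ofReal (G x) ∂ν = ⨆ k, ∫⁻ x, F k x ∂ν := by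
    rw [← lintegral_iSup hFm hFmono]
    exact lintegral_congr fun x => (hsup x).symm
  rw [hlim]
  refine iSup_le fun k => ?_
  have hint : IntegrableOn G (S k) ν := by
    refine Integrable.mono' (integrable_const (k : ℝ))
      (hG.aestronglyMeasurable.restrict) ?_
    filter_upwards [ae_restrict_mem (hSm k)] with x hx
    rw [Real.norm_eq_abs, abs_of_nonneg hx.1]
    exact hx.2
  have h1 : ∫⁻ x, F k x ∂ν = ∫⁻ x in S k, ENNReal.ofReal (G x) ∂ν :=
    lintegral_indicator (hSm k) _
  have h2 : ∫⁻ x in S k, ENNReal.ofReal (G x) ∂ν = ENNReal.ofReal (∫ x in S k, G x ∂ν) := by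
    rw [ofReal_integral_eq_lintegral_ofReal hint ?_]
    filter_upwards [ae_restrict_mem (hSm k)] with x hx using hx.1
  have h3 : ∫ x in S k, G x ∂ν ≤ ∫ x, ‖f x‖ ∂ν := by
    rw [heq k]
    calc ∫ x in S k, f x ∂ν ≤ ‖∫ x in S k, f x ∂ν‖ := le_abs_self _
    _ ≤ ∫ x in S k, ‖f x‖ ∂ν := norm_integral_le_integral_norm _
    _ ≤ ∫ x, ‖f x‖ ∂ν := by
        apply setIntegral_le_integral hf.norm
        filter_upwards with x using norm_nonneg _
  calc ∫⁻ x, F k x ∂ν = ENNReal.ofReal (∫ x in S k, G x ∂ν) := by rw [h1, h2]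
  _ ≤ ENNReal.ofReal (∫ x, ‖f x‖ ∂ν) := ENNReal.ofReal_le_ofReal h3
  _ = ∫⁻ x, ‖f x‖₊ ∂ν := by
      rw [ofReal_integral_eq_lintegral_ofReal hf.norm
        (Filter.Eventually.of_forall fun x => norm_nonneg _)]
      simp_rw [ofReal_norm_eq_coe_nnnorm]

/-- A regression curve has `L¹` norm controlled by twice that of the second coordinate. -/
lemma regCurve_enorm_le {Ω₁ : Type*} [MeasurableSpace Ω₁] {ν : Measure (Ω₁ × ℝ)}
    [IsFiniteMeasure ν] {g : Ω₁ → ℝ} (hg : Measurable g) (h : IsRegCurve ν g) :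
    ∫⁻ x, ‖g x.1‖₊ ∂ν ≤ 2 * ∫⁻ x, ‖x.2‖₊ ∂ν := by
  have hGm : Measurable fun x : Ω₁ × ℝ => g x.1 := hg.comp measurable_fst
  have key : ∀ x : Ω₁ × ℝ, (‖g x.1‖₊ : ℝ≥0∞)
      = ENNReal.ofReal (g x.1) + ENNReal.ofReal (-(g x.1)) := by
    intro x
    rcases le_total 0 (g x.1) with h0 | h0
    · rw [show ENNReal.ofReal (-(g x.1)) = 0 from ENNReal.ofReal_eq_zero.mpr (by linarith),
        add_zero, ← ofReal_norm_eq_coe_nnnorm, Real.norm_eq_abs, abs_of_nonneg h0]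
    · rw [show ENNReal.ofReal (g x.1) = 0 from ENNReal.ofReal_eq_zero.mpr h0,
        zero_add, ← ofReal_norm_eq_coe_nnnorm, Real.norm_eq_abs, abs_of_nonpos h0]
  have hs1 : ∫⁻ x, ENNReal.ofReal (g x.1) ∂ν ≤ ∫⁻ x, ‖x.2‖₊ ∂ν := by
    refine aux_pos hGm h.1 fun k => ?_
    have hA : MeasurableSet {a : Ω₁ | 0 ≤ g a ∧ g a ≤ (k : ℝ)} :=
      (measurableSet_le measurable_const hg).inter (measurableSet_le hg measurable_const)
    have : {x : Ω₁ × ℝ | 0 ≤ g x.1 ∧ g x.1 ≤ (k : ℝ)}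
        = Prod.fst ⁻¹' {a : Ω₁ | 0 ≤ g a ∧ g a ≤ (k : ℝ)} := rfl
    rw [this]
    exact (h.2 _ hA).symm
  have hs2 : ∫⁻ x, ENNReal.ofReal (-(g x.1)) ∂ν ≤ ∫⁻ x, ‖x.2‖₊ ∂ν := by
    have : ∫⁻ x, ENNReal.ofReal (-(g x.1)) ∂ν ≤ ∫⁻ x : Ω₁ × ℝ, ‖-x.2‖₊ ∂ν := by
      refine aux_pos hGm.neg h.1.neg fun k => ?_
      have hA : MeasurableSet {a : Ω₁ | 0 ≤ -g a ∧ -g a ≤ (k : ℝ)} :=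
        (measurableSet_le measurable_const hg.neg).inter
          (measurableSet_le hg.neg measurable_const)
      have hset : {x : Ω₁ × ℝ | 0 ≤ -(g x.1) ∧ -(g x.1) ≤ (k : ℝ)}
          = Prod.fst ⁻¹' {a : Ω₁ | 0 ≤ -g a ∧ -g a ≤ (k : ℝ)} := rfl
      rw [hset, integral_neg, ← h.2 _ hA, ← integral_neg]
    simpa using this
  calc ∫⁻ x, (‖g x.1‖₊ : ℝ≥0∞) ∂ν
      = ∫⁻ x, (ENNReal.ofReal (g x.1) + ENNReal.ofReal (-(g x.1))) ∂ν :=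
        lintegral_congr key
    _ = ∫⁻ x, ENNReal.ofReal (g x.1) ∂ν + ∫⁻ x, ENNReal.ofReal (-(g x.1)) ∂ν :=
        lintegral_add_left hGm.ennreal_ofReal _
    _ ≤ ∫⁻ x, ‖x.2‖₊ ∂ν + ∫⁻ x, ‖x.2‖₊ ∂ν := add_le_add hs1 hs2
    _ = 2 * ∫⁻ x, ‖x.2‖₊ ∂ν := (two_mul _).symm

lemma isProbabilityMeasure_bind {Θ α : Type*} [MeasurableSpace Θ] [MeasurableSpace α]
    (Q : Measure Θ) [IsProbabilityMeasure Q] (S : Kernel Θ α) [IsMarkovKernel S] :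
    IsProbabilityMeasure (Q.bind fun θ => S θ) := by
  constructor
  rw [Measure.bind_apply MeasurableSet.univ S.measurable.aemeasurable]
  simp

lemma bind_eq_map_snd {Θ α : Type*} [MeasurableSpace Θ] [MeasurableSpace α]
    (Q : Measure Θ) [SFinite Q] (S : Kernel Θ α) [IsSFiniteKernel S] :
    (Q.bind fun θ => S θ) = (Q ⊗ₘ S).map Prod.snd := by
  ext s hs
  rw [Measure.bind_apply hs S.measurable.aemeasurable, Measure.map_apply measurable_snd hs,
    Measure.compProd_apply (measurable_snd hs)]
  rfl

lemma integral_bind_kernel {Θ α : Type*} [MeasurableSpace Θ] [MeasurableSpace α]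
    (Q : Measure Θ) [SFinite Q] (S : Kernel Θ α) [IsSFiniteKernel S] {f : α → ℝ}
    (hfm : StronglyMeasurable f) (hf : Integrable f (Q.bind fun θ => S θ)) :
    ∫ x, f x ∂(Q.bind fun θ => S θ) = ∫ θ, ∫ x, f x ∂(S θ) ∂Q := by
  rw [bind_eq_map_snd] at hf ⊢
  rw [integral_map measurable_snd.aemeasurable hfm.aestronglyMeasurable]
  have hf' : Integrable (fun p : Θ × α => f p.2) (Q ⊗ₘ S) :=
    (integrable_map_measure hfm.aestronglyMeasurable measurable_snd.aemeasurable).mp hf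
  exact Measure.integral_compProd hf'

lemma posterior_compProd_eq {Θ α : Type*} [MeasurableSpace Θ] [MeasurableSpace α]
    (Q : Measure Θ) [IsProbabilityMeasure Q] (S : Kernel Θ α) [IsMarkovKernel S]
    (post : Kernel α Θ) [IsMarkovKernel post] (hp : IsPosterior Q S post) :
    (Q ⊗ₘ S).map Prod.swap = (Q.bind fun θ => S θ) ⊗ₘ post := by
  haveI := isProbabilityMeasure_bind Q S
  haveI : IsProbabilityMeasure ((Q ⊗ₘ S).map Prod.swap) :=
    Measure.isProbabilityMeasure_map measurable_swap.aemeasurable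
  refine MeasureTheory.ext_of_generate_finite _ generateFrom_prod.symm isPiSystem_prod ?_ ?_
  · rintro s ⟨A', hA', T, hT, rfl⟩
    rw [Measure.map_apply measurable_swap ((hA' : MeasurableSet A').prod hT),
      Set.preimage_swap_prod, Measure.compProd_apply_prod hT hA',
      Measure.compProd_apply_prod hA' hT]
    exact hp A' T hA' hT
  · simp

lemma lintegral_swap_compProd {Θ α : Type*} [MeasurableSpace Θ] [MeasurableSpace α]
    (Q : Measure Θ) [SFinite Q] (S : Kernel Θ α) [IsSFiniteKernel S]
    {F : α × Θ → ℝ≥0∞} (hF : Measurable F) :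
    ∫⁻ p, F p ∂((Q ⊗ₘ S).map Prod.swap) = ∫⁻ θ, ∫⁻ x, F (x, θ) ∂(S θ) ∂Q := by
  rw [lintegral_map hF measurable_swap]
  exact Measure.lintegral_compProd (f := fun p => F p.swap) (hF.comp measurable_swap)

lemma integral_swap_compProd {Θ α : Type*} [MeasurableSpace Θ] [MeasurableSpace α]
    (Q : Measure Θ) [SFinite Q] (S : Kernel Θ α) [IsSFiniteKernel S]
    {F : α × Θ → ℝ} (hF : Integrable F ((Q ⊗ₘ S).map Prod.swap)) :
    ∫ p, F p ∂((Q ⊗ₘ S).map Prod.swap) = ∫ θ, ∫ x, F (x, θ) ∂(S θ) ∂Q := by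
  have h1 : (Q ⊗ₘ S).map Prod.swap
      = (Q ⊗ₘ S).map (MeasurableEquiv.prodComm : Θ × α ≃ᵐ α × Θ) := rfl
  rw [h1] at hF ⊢
  rw [integral_map_equiv]
  have hF' : Integrable (F ∘ (MeasurableEquiv.prodComm : Θ × α ≃ᵐ α × Θ)) (Q ⊗ₘ S) :=
    (integrable_map_equiv _ F).mp hF
  exact Measure.integral_compProd hF'

/-- Lemma, part (i): with `Y(x',x,θ) := E_{R_θ}(p₂ | p₁ = x₁)`, the regression
curve of `p₂` on `p₁` with respect to the posterior predictive distribution based on the first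
`n` observations is, `Π_ℕ`-a.e., the conditional expectation of `Y` under `Π_ℕ` given the first
`n` sample coordinates and the first coordinate of the new observation. -/
theorem stmt_3 {Θ Ω₁ : Type*} [MeasurableSpace Θ] [MeasurableSpace Ω₁]
    (Q : Measure Θ) [IsProbabilityMeasure Q]
    (R : Kernel Θ (Ω₁ × ℝ)) [IsMarkovKernel R]
    (hsq : ∫⁻ θ, ∫⁻ x, ENNReal.ofReal (x.2 ^ 2) ∂(R θ) ∂Q ≠ ⊤)
    (Rn : (n : ℕ) → Kernel Θ (Fin n → Ω₁ × ℝ)) [∀ n, IsMarkovKernel (Rn n)]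
    (hRn : ∀ n θ, Rn n θ = Measure.pi fun _ : Fin n => R θ)
    (Rinf : Kernel Θ (ℕ → Ω₁ × ℝ)) [IsMarkovKernel Rinf]
    (hRinf : ∀ θ n, (Rinf θ).map (fun x (i : Fin n) => x i) = Measure.pi fun _ : Fin n => R θ)
    (r : Θ → Ω₁ → ℝ) (hr_meas : Measurable (Function.uncurry r))
    (hr : ∀ θ, IsRegCurve (R θ) (r θ))
    (postn : (n : ℕ) → Kernel (Fin n → Ω₁ × ℝ) Θ) [∀ n, IsMarkovKernel (postn n)]
    (hpostn : ∀ n, IsPosterior Q (Rn n) (postn n))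
    (mstar : (n : ℕ) → (Fin n → Ω₁ × ℝ) → Ω₁ → ℝ)
    (hmstar_meas : ∀ n, Measurable (Function.uncurry (mstar n)))
    (hmstar : ∀ n x', IsRegCurve (Measure.bind (postn n x') fun θ => R θ) (mstar n x'))
    (n : ℕ) :
    (fun p : (ℕ → Ω₁ × ℝ) × (Ω₁ × ℝ) × Θ => mstar n (fun i : Fin n => p.1 i) p.2.1.1)
      =ᵐ[PiM Q Rinf R]
    (PiM Q Rinf R)[fun p : (ℕ → Ω₁ × ℝ) × (Ω₁ × ℝ) × Θ => r p.2.2 p.2.1.1 |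
      MeasurableSpace.comap (fun p : (ℕ → Ω₁ × ℝ) × (Ω₁ × ℝ) × Θ =>
        ((fun i : Fin n => p.1 i), p.2.1.1)) inferInstance] := by
  classical
  -- basic objects
  set π : (ℕ → Ω₁ × ℝ) → (Fin n → Ω₁ × ℝ) := fun x i => x i with hπdef
  have hπ : Measurable π := measurable_pi_lambda _ fun i => measurable_pi_apply _
  set T : (ℕ → Ω₁ × ℝ) × (Ω₁ × ℝ) × Θ → (Fin n → Ω₁ × ℝ) × Ω₁ :=
    fun p => ((fun i : Fin n => p.1 i), p.2.1.1) with hTdef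
  have hT : Measurable T := (hπ.comp measurable_fst).prodMk measurable_snd.fst.fst
  have hm : MeasurableSpace.comap T inferInstance
      ≤ (inferInstance : MeasurableSpace ((ℕ → Ω₁ × ℝ) × (Ω₁ × ℝ) × Θ)) := hT.comap_le
  have hY : Measurable fun p : (ℕ → Ω₁ × ℝ) × (Ω₁ × ℝ) × Θ => r p.2.2 p.2.1.1 :=
    hr_meas.comp (measurable_snd.snd.prodMk measurable_snd.fst.fst)
  have hgme : Measurable fun p : (ℕ → Ω₁ × ℝ) × (Ω₁ × ℝ) × Θ =>
      mstar n (fun i : Fin n => p.1 i) p.2.1.1 := (hmstar_meas n).comp hT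
  have hmsy : ∀ y, Measurable (mstar n y) := fun y => (hmstar_meas n).of_uncurry_left
  -- the measure `PiM` as the image of a compProd under a measurable equivalence
  set eqv : (Θ × ((ℕ → Ω₁ × ℝ) × (Ω₁ × ℝ))) ≃ᵐ ((ℕ → Ω₁ × ℝ) × (Ω₁ × ℝ) × Θ) :=
    MeasurableEquiv.prodComm.trans MeasurableEquiv.prodAssoc with heqv
  have hPiM : PiM Q Rinf R = (Q ⊗ₘ (Rinf ×ₖ R)).map eqv := rfl
  haveI : IsProbabilityMeasure (PiM Q Rinf R) := by
    rw [hPiM]; exact Measure.isProbabilityMeasure_map eqv.measurable.aemeasurable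
  -- lintegral over PiM
  have lintegral_PiM : ∀ F : (ℕ → Ω₁ × ℝ) × (Ω₁ × ℝ) × Θ → ℝ≥0∞, Measurable F →
      ∫⁻ p, F p ∂(PiM Q Rinf R)
        = ∫⁻ θ, ∫⁻ x', ∫⁻ x, F (x', x, θ) ∂(R θ) ∂(Rinf θ) ∂Q := by
    intro F hF
    rw [hPiM, lintegral_map_equiv F eqv,
      Measure.lintegral_compProd (f := fun a => F (eqv a)) (hF.comp eqv.measurable)]
    refine lintegral_congr fun θ => ?_
    rw [Kernel.prod_apply]
    exact lintegral_prod _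
      ((hF.comp (measurable_fst.prodMk (measurable_snd.prodMk measurable_const))).aemeasurable)
  -- Bochner integral over PiM
  have integral_PiM : ∀ F : (ℕ → Ω₁ × ℝ) × (Ω₁ × ℝ) × Θ → ℝ,
      Integrable F (PiM Q Rinf R) →
      ∫ p, F p ∂(PiM Q Rinf R) = ∫ θ, ∫ x', ∫ x, F (x', x, θ) ∂(R θ) ∂(Rinf θ) ∂Q := by
    intro F hFi
    rw [hPiM] at hFi ⊢
    rw [integral_map_equiv]
    have hFi' : Integrable (fun a => F (eqv a)) (Q ⊗ₘ (Rinf ×ₖ R)) :=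
      (integrable_map_equiv eqv F).mp hFi
    rw [Measure.integral_compProd hFi']
    have hsec := (Measure.integrable_compProd_iff hFi'.aestronglyMeasurable).mp hFi'
    refine integral_congr_ae ?_
    filter_upwards [hsec.1] with θ hθ
    rw [Kernel.prod_apply] at hθ ⊢
    exact integral_prod _ hθ
  -- finiteness of the first absolute moment
  have hHmeas : Measurable fun θ => ∫⁻ x, (‖x.2‖₊ : ℝ≥0∞) ∂(R θ) :=
    Measurable.lintegral_kernel_prod_right (κ := R)
      (f := fun _ x => (‖x.2‖₊ : ℝ≥0∞))
      (measurable_snd.snd.nnnorm.coe_nnreal_ennreal)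
  have hC0 : ∫⁻ θ, ∫⁻ x, (‖x.2‖₊ : ℝ≥0∞) ∂(R θ) ∂Q ≠ ⊤ := by
    have habs : ∀ t : ℝ, (‖t‖₊ : ℝ≥0∞) ≤ 1 + ENNReal.ofReal (t ^ 2) := by
      intro t
      rw [← ofReal_norm_eq_coe_nnnorm, ← ENNReal.ofReal_one,
        ← ENNReal.ofReal_add zero_le_one (sq_nonneg t)]
      refine ENNReal.ofReal_le_ofReal ?_
      rw [Real.norm_eq_abs]
      nlinarith [abs_nonneg t, sq_abs t]
    have hb : ∫⁻ θ, ∫⁻ x, (‖x.2‖₊ : ℝ≥0∞) ∂(R θ) ∂Q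
        ≤ ∫⁻ θ, ∫⁻ x, (1 + ENNReal.ofReal (x.2 ^ 2)) ∂(R θ) ∂Q :=
      lintegral_mono fun θ => lintegral_mono fun x => habs _
    have hsplit : ∀ θ, ∫⁻ x, (1 + ENNReal.ofReal (x.2 ^ 2)) ∂(R θ)
        = 1 + ∫⁻ x, ENNReal.ofReal (x.2 ^ 2) ∂(R θ) := by
      intro θ
      rw [lintegral_add_left measurable_const]
      simp
    refine ne_top_of_le_ne_top ?_ hb
    rw [lintegral_congr hsplit, lintegral_add_left measurable_const]
    · simp only [lintegral_const, measure_univ, mul_one, one_mul]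
      exact ENNReal.add_ne_top.mpr ⟨ENNReal.one_ne_top, hsq⟩
  -- posterior machinery
  set μn : Measure (Fin n → Ω₁ × ℝ) := Q.bind fun θ => Rn n θ with hμn
  haveI : IsProbabilityMeasure μn := isProbabilityMeasure_bind Q (Rn n)
  have hM : (Q ⊗ₘ Rn n).map Prod.swap = μn ⊗ₘ postn n :=
    posterior_compProd_eq Q (Rn n) (postn n) (hpostn n)
  set ν : (Fin n → Ω₁ × ℝ) → Measure (Ω₁ × ℝ) :=
    fun y => Measure.bind (postn n y) fun θ => R θ with hν
  have hνprob : ∀ y, IsProbabilityMeasure (ν y) := fun y => isProbabilityMeasure_bind _ R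
  have hmap : ∀ θ, (Rinf θ).map π = Rn n θ := fun θ => by rw [hRinf θ n, hRn n θ]
  have lswap : ∀ F : (Fin n → Ω₁ × ℝ) × Θ → ℝ≥0∞, Measurable F →
      ∫⁻ θ, ∫⁻ y, F (y, θ) ∂(Rn n θ) ∂Q
        = ∫⁻ y, ∫⁻ θ, F (y, θ) ∂(postn n y) ∂μn := by
    intro F hF
    rw [← lintegral_swap_compProd Q (Rn n) hF, hM, Measure.lintegral_compProd hF]
  have iswap : ∀ F : (Fin n → Ω₁ × ℝ) × Θ → ℝ, Integrable F (μn ⊗ₘ postn n) →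
      ∫ θ, ∫ y, F (y, θ) ∂(Rn n θ) ∂Q = ∫ y, ∫ θ, F (y, θ) ∂(postn n y) ∂μn := by
    intro F hF
    rw [← integral_swap_compProd Q (Rn n) (by rw [hM]; exact hF), hM,
      Measure.integral_compProd hF]
  -- measurability of the mstar-L1-norm kernel integral
  have hF2meas : Measurable fun q : (Fin n → Ω₁ × ℝ) × Θ =>
      ∫⁻ x, (‖mstar n q.1 x.1‖₊ : ℝ≥0∞) ∂(R q.2) := by
    have hin : Measurable fun u : ((Fin n → Ω₁ × ℝ) × Θ) × (Ω₁ × ℝ) =>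
        (‖mstar n u.1.1 u.2.1‖₊ : ℝ≥0∞) :=
      ((hmstar_meas n).comp (measurable_fst.fst.prodMk measurable_snd.fst)
        ).nnnorm.coe_nnreal_ennreal
    exact Measurable.lintegral_kernel_prod_right'
      (κ := R.comap Prod.snd measurable_snd) hin
  -- norm of x.2 under ν y
  have hνx2 : ∀ y, ∫⁻ x, (‖x.2‖₊ : ℝ≥0∞) ∂(ν y)
      = ∫⁻ θ, (∫⁻ x, (‖x.2‖₊ : ℝ≥0∞) ∂(R θ)) ∂(postn n y) := fun y =>
    Measure.lintegral_bind R.measurable.aemeasurable (measurable_snd.nnnorm.coe_nnreal_ennreal.aemeasurable)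
  -- key chain for mstar L1 bounds
  have hmg_chain : ∫⁻ θ, ∫⁻ y, (∫⁻ x, (‖mstar n y x.1‖₊ : ℝ≥0∞) ∂(R θ)) ∂(Rn n θ) ∂Q
      ≤ 2 * ∫⁻ θ, ∫⁻ x, (‖x.2‖₊ : ℝ≥0∞) ∂(R θ) ∂Q := by
    rw [lswap _ hF2meas]
    have h1 : ∀ y, ∫⁻ θ, ∫⁻ x, (‖mstar n y x.1‖₊ : ℝ≥0∞) ∂(R θ) ∂(postn n y)
        = ∫⁻ x, (‖mstar n y x.1‖₊ : ℝ≥0∞) ∂(ν y) := fun y =>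
      (Measure.lintegral_bind R.measurable.aemeasurable
        (((hmsy y).comp measurable_fst).nnnorm.coe_nnreal_ennreal.aemeasurable)).symm
    calc ∫⁻ y, ∫⁻ θ, ∫⁻ x, (‖mstar n y x.1‖₊ : ℝ≥0∞) ∂(R θ) ∂(postn n y) ∂μn
        = ∫⁻ y, ∫⁻ x, (‖mstar n y x.1‖₊ : ℝ≥0∞) ∂(ν y) ∂μn := lintegral_congr h1
      _ ≤ ∫⁻ y, 2 * ∫⁻ x, (‖x.2‖₊ : ℝ≥0∞) ∂(ν y) ∂μn := by
          refine lintegral_mono fun y => ?_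
          haveI := hνprob y
          exact regCurve_enorm_le (hmsy y) (hmstar n y)
      _ = 2 * ∫⁻ y, ∫⁻ x, (‖x.2‖₊ : ℝ≥0∞) ∂(ν y) ∂μn := by
          rw [lintegral_const_mul]
          have : Measurable fun y => ∫⁻ θ, (∫⁻ x, (‖x.2‖₊ : ℝ≥0∞) ∂(R θ)) ∂(postn n y) :=
            Measurable.lintegral_kernel_prod_right (κ := postn n)
              (f := fun _ θ => ∫⁻ x, (‖x.2‖₊ : ℝ≥0∞) ∂(R θ))
              (hHmeas.comp measurable_snd)
          exact (by simp_rw [hνx2]; exact this)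
      _ = 2 * ∫⁻ y, ∫⁻ θ, (∫⁻ x, (‖x.2‖₊ : ℝ≥0∞) ∂(R θ)) ∂(postn n y) ∂μn := by
          congr 1; exact lintegral_congr hνx2
      _ = 2 * ∫⁻ θ, ∫⁻ y, (∫⁻ x, (‖x.2‖₊ : ℝ≥0∞) ∂(R θ)) ∂(Rn n θ) ∂Q := by
          congr 1
          exact (lswap _ (hHmeas.comp measurable_snd)).symm
      _ = 2 * ∫⁻ θ, ∫⁻ x, (‖x.2‖₊ : ℝ≥0∞) ∂(R θ) ∂Q := by
          congr 1
          refine lintegral_congr fun θ => ?_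
          simp [lintegral_const]
  -- integrability of Y
  have hYint : Integrable (fun p : (ℕ → Ω₁ × ℝ) × (Ω₁ × ℝ) × Θ => r p.2.2 p.2.1.1)
      (PiM Q Rinf R) := by
    refine ⟨hY.aestronglyMeasurable, ?_⟩
    have : ∫⁻ p, (‖r p.2.2 p.2.1.1‖₊ : ℝ≥0∞) ∂(PiM Q Rinf R)
        = ∫⁻ θ, ∫⁻ x', ∫⁻ x, (‖r θ x.1‖₊ : ℝ≥0∞) ∂(R θ) ∂(Rinf θ) ∂Q :=
      lintegral_PiM _ hY.nnnorm.coe_nnreal_ennreal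
    rw [HasFiniteIntegral]; simp only [enorm_eq_nnnorm]; rw [this]
    calc ∫⁻ θ, ∫⁻ x', ∫⁻ x, (‖r θ x.1‖₊ : ℝ≥0∞) ∂(R θ) ∂(Rinf θ) ∂Q
        = ∫⁻ θ, ∫⁻ x, (‖r θ x.1‖₊ : ℝ≥0∞) ∂(R θ) ∂Q := by
          refine lintegral_congr fun θ => ?_
          simp [lintegral_const]
      _ ≤ ∫⁻ θ, 2 * ∫⁻ x, (‖x.2‖₊ : ℝ≥0∞) ∂(R θ) ∂Q :=
          lintegral_mono fun θ => regCurve_enorm_le hr_meas.of_uncurry_left (hr θ)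
      _ = 2 * ∫⁻ θ, ∫⁻ x, (‖x.2‖₊ : ℝ≥0∞) ∂(R θ) ∂Q := lintegral_const_mul _ hHmeas
      _ < ⊤ := ENNReal.mul_lt_top (by norm_num) hC0.lt_top
  -- integrability of the mstar composite
  have hgint : Integrable (fun p : (ℕ → Ω₁ × ℝ) × (Ω₁ × ℝ) × Θ =>
      mstar n (fun i : Fin n => p.1 i) p.2.1.1) (PiM Q Rinf R) := by
    refine ⟨hgme.aestronglyMeasurable, ?_⟩
    have hstep : ∫⁻ p, (‖mstar n (fun i : Fin n => p.1 i) p.2.1.1‖₊ : ℝ≥0∞) ∂(PiM Q Rinf R)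
        = ∫⁻ θ, ∫⁻ x', ∫⁻ x, (‖mstar n (fun i : Fin n => x' i) x.1‖₊ : ℝ≥0∞)
            ∂(R θ) ∂(Rinf θ) ∂Q :=
      lintegral_PiM _ hgme.nnnorm.coe_nnreal_ennreal
    rw [HasFiniteIntegral]; simp only [enorm_eq_nnnorm]; rw [hstep]
    have hx' : ∀ θ, ∫⁻ x', (∫⁻ x, (‖mstar n (fun i : Fin n => x' i) x.1‖₊ : ℝ≥0∞) ∂(R θ))
        ∂(Rinf θ) = ∫⁻ y, (∫⁻ x, (‖mstar n y x.1‖₊ : ℝ≥0∞) ∂(R θ)) ∂(Rn n θ) := by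
      intro θ
      rw [← hmap θ]
      exact (lintegral_map (hF2meas.comp (measurable_id.prodMk measurable_const)) hπ).symm
    calc ∫⁻ θ, ∫⁻ x', ∫⁻ x, (‖mstar n (fun i : Fin n => x' i) x.1‖₊ : ℝ≥0∞)
            ∂(R θ) ∂(Rinf θ) ∂Q
        = ∫⁻ θ, ∫⁻ y, (∫⁻ x, (‖mstar n y x.1‖₊ : ℝ≥0∞) ∂(R θ)) ∂(Rn n θ) ∂Q :=
          lintegral_congr hx'
      _ ≤ 2 * ∫⁻ θ, ∫⁻ x, (‖x.2‖₊ : ℝ≥0∞) ∂(R θ) ∂Q := hmg_chain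
      _ < ⊤ := ENNReal.mul_lt_top (by norm_num) hC0.lt_top
  -- sigma-finiteness of the trimmed measure
  haveI : SigmaFinite ((PiM Q Rinf R).trim hm) := by
    have hfin : IsFiniteMeasure ((PiM Q Rinf R).trim hm) := by
      constructor
      rw [trim_measurableSet_eq hm MeasurableSet.univ]
      exact measure_lt_top _ _
    infer_instance
  refine ae_eq_condExp_of_forall_setIntegral_eq hm hYint
    (fun s _ _ => hgint.integrableOn) ?_ ?_
  · -- main set-integral equality
    rintro s ⟨B, hB, rfl⟩ -
    set χ : (Fin n → Ω₁ × ℝ) × Ω₁ → ℝ := B.indicator fun _ => 1 with hχdef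
    have hχ : Measurable χ := measurable_const.indicator hB
    have hχ01 : ∀ q, ‖χ q‖ ≤ 1 := by
      intro q; by_cases hq : q ∈ B <;> simp [χ, Set.indicator_apply, hq]
    have hA : ∀ y : Fin n → Ω₁ × ℝ, MeasurableSet {a : Ω₁ | (y, a) ∈ B} :=
      fun y => measurable_prodMk_left hB
    have hind : ∀ (y : Fin n → Ω₁ × ℝ) (f : Ω₁ × ℝ → ℝ) (x : Ω₁ × ℝ),
        χ (y, x.1) * f x = (Prod.fst ⁻¹' {a : Ω₁ | (y, a) ∈ B}).indicator f x := by
      intro y f x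
      by_cases hx : (y, x.1) ∈ B <;>
        simp [χ, Set.indicator_apply, hx, Set.mem_preimage, Set.mem_setOf_eq]
    -- regression identities
    have keyR : ∀ θ (y : Fin n → Ω₁ × ℝ),
        ∫ x, χ (y, x.1) * r θ x.1 ∂(R θ) = ∫ x, χ (y, x.1) * x.2 ∂(R θ) := by
      intro θ y
      simp_rw [hind y (fun x => r θ x.1), hind y (fun x : Ω₁ × ℝ => x.2)]
      rw [integral_indicator (measurable_fst (hA y)), integral_indicator (measurable_fst (hA y))]
      exact ((hr θ).2 _ (hA y)).symm
    have keyM : ∀ y : Fin n → Ω₁ × ℝ,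
        ∫ x, χ (y, x.1) * x.2 ∂(ν y) = ∫ x, χ (y, x.1) * mstar n y x.1 ∂(ν y) := by
      intro y
      simp_rw [hind y (fun x : Ω₁ × ℝ => x.2), hind y (fun x => mstar n y x.1)]
      rw [integral_indicator (measurable_fst (hA y)), integral_indicator (measurable_fst (hA y))]
      exact (hmstar n y).2 _ (hA y)
    -- the two kernel averaged functions
    set Φ : (Fin n → Ω₁ × ℝ) × Θ → ℝ := fun q => ∫ x, χ (q.1, x.1) * x.2 ∂(R q.2) with hΦdef
    set Φg : (Fin n → Ω₁ × ℝ) × Θ → ℝ :=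
      fun q => ∫ x, χ (q.1, x.1) * mstar n q.1 x.1 ∂(R q.2) with hΦgdef
    have hΦm : StronglyMeasurable Φ := by
      have h := MeasureTheory.StronglyMeasurable.integral_kernel_prod_right'
        (κ := R.comap Prod.snd measurable_snd)
        (f := fun u : ((Fin n → Ω₁ × ℝ) × Θ) × (Ω₁ × ℝ) => χ (u.1.1, u.2.1) * u.2.2)
        (((hχ.comp (measurable_fst.fst.prodMk measurable_snd.fst)).mul
          measurable_snd.snd).stronglyMeasurable)
      exact h
    have hΦgm : StronglyMeasurable Φg := by
      have h := MeasureTheory.StronglyMeasurable.integral_kernel_prod_right'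
        (κ := R.comap Prod.snd measurable_snd)
        (f := fun u : ((Fin n → Ω₁ × ℝ) × Θ) × (Ω₁ × ℝ) =>
          χ (u.1.1, u.2.1) * mstar n u.1.1 u.2.1)
        (((hχ.comp (measurable_fst.fst.prodMk measurable_snd.fst)).mul
          ((hmstar_meas n).comp
            (measurable_fst.fst.prodMk measurable_snd.fst))).stronglyMeasurable)
      exact h
    -- bounds on χ in ℝ≥0∞ norm
    have hχ1 : ∀ q, (‖χ q‖₊ : ℝ≥0∞) ≤ 1 := by
      intro q
      rw [← ofReal_norm_eq_coe_nnnorm]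
      exact ENNReal.ofReal_le_one.mpr (hχ01 q)
    have hmulnorm : ∀ (q : (Fin n → Ω₁ × ℝ) × Ω₁) (t : ℝ),
        (‖χ q * t‖₊ : ℝ≥0∞) ≤ (‖t‖₊ : ℝ≥0∞) := by
      intro q t
      calc (‖χ q * t‖₊ : ℝ≥0∞) = (‖χ q‖₊ : ℝ≥0∞) * ‖t‖₊ := by
            rw [nnnorm_mul, ENNReal.coe_mul]
        _ ≤ 1 * ‖t‖₊ := mul_le_mul_left (hχ1 q) _
        _ = ‖t‖₊ := one_mul _
    -- integrability of Φ and Φg over the joint posterior measure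
    have hΦint : Integrable Φ (μn ⊗ₘ postn n) := by
      refine ⟨hΦm.aestronglyMeasurable, ?_⟩
      rw [HasFiniteIntegral]
      have hb : ∀ q : (Fin n → Ω₁ × ℝ) × Θ,
          (‖Φ q‖₊ : ℝ≥0∞) ≤ ∫⁻ x, (‖x.2‖₊ : ℝ≥0∞) ∂(R q.2) := by
        intro q
        refine le_trans (enorm_integral_le_lintegral_enorm _)
          (lintegral_mono fun x => hmulnorm _ _)
      calc ∫⁻ q, (‖Φ q‖₊ : ℝ≥0∞) ∂(μn ⊗ₘ postn n)
          ≤ ∫⁻ q, (∫⁻ x, (‖x.2‖₊ : ℝ≥0∞) ∂(R q.2)) ∂(μn ⊗ₘ postn n) := lintegral_mono hb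
        _ = ∫⁻ y, ∫⁻ θ, (∫⁻ x, (‖x.2‖₊ : ℝ≥0∞) ∂(R θ)) ∂(postn n y) ∂μn :=
            Measure.lintegral_compProd (hHmeas.comp measurable_snd)
        _ = ∫⁻ θ, ∫⁻ y, (∫⁻ x, (‖x.2‖₊ : ℝ≥0∞) ∂(R θ)) ∂(Rn n θ) ∂Q :=
            (lswap _ (hHmeas.comp measurable_snd)).symm
        _ = ∫⁻ θ, ∫⁻ x, (‖x.2‖₊ : ℝ≥0∞) ∂(R θ) ∂Q := by
            refine lintegral_congr fun θ => ?_
            simp [lintegral_const]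
        _ < ⊤ := hC0.lt_top
    have hΦgint : Integrable Φg (μn ⊗ₘ postn n) := by
      refine ⟨hΦgm.aestronglyMeasurable, ?_⟩
      rw [HasFiniteIntegral]
      have hb : ∀ q : (Fin n → Ω₁ × ℝ) × Θ,
          (‖Φg q‖₊ : ℝ≥0∞) ≤ ∫⁻ x, (‖mstar n q.1 x.1‖₊ : ℝ≥0∞) ∂(R q.2) := by
        intro q
        refine le_trans (enorm_integral_le_lintegral_enorm _)
          (lintegral_mono fun x => hmulnorm _ _)
      calc ∫⁻ q, (‖Φg q‖₊ : ℝ≥0∞) ∂(μn ⊗ₘ postn n)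
          ≤ ∫⁻ q, (∫⁻ x, (‖mstar n q.1 x.1‖₊ : ℝ≥0∞) ∂(R q.2)) ∂(μn ⊗ₘ postn n) :=
            lintegral_mono hb
        _ = ∫⁻ y, ∫⁻ θ, (∫⁻ x, (‖mstar n y x.1‖₊ : ℝ≥0∞) ∂(R θ)) ∂(postn n y) ∂μn :=
            Measure.lintegral_compProd hF2meas
        _ = ∫⁻ θ, ∫⁻ y, (∫⁻ x, (‖mstar n y x.1‖₊ : ℝ≥0∞) ∂(R θ)) ∂(Rn n θ) ∂Q :=
            (lswap _ hF2meas).symm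
        _ ≤ 2 * ∫⁻ θ, ∫⁻ x, (‖x.2‖₊ : ℝ≥0∞) ∂(R θ) ∂Q := hmg_chain
        _ < ⊤ := ENNReal.mul_lt_top (by norm_num) hC0.lt_top
    -- multiplication by χ preserves integrability
    have hint_mul : ∀ {μ' : Measure (Ω₁ × ℝ)} {f : Ω₁ × ℝ → ℝ}, Measurable f →
        Integrable f μ' → ∀ y : Fin n → Ω₁ × ℝ,
        Integrable (fun x => χ (y, x.1) * f x) μ' := by
      intro μ' f hf hfi y
      refine hfi.norm.mono' (((hχ.comp ((measurable_const (a := y)).prodMk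
        measurable_fst)).mul hf).aestronglyMeasurable) ?_
      filter_upwards with x
      rw [norm_mul]
      calc ‖χ (y, x.1)‖ * ‖f x‖ ≤ 1 * ‖f x‖ :=
            mul_le_mul_of_nonneg_right (hχ01 _) (norm_nonneg _)
        _ = ‖f x‖ := one_mul _
    have hint_mstar : ∀ y : Fin n → Ω₁ × ℝ,
        Integrable (fun x : Ω₁ × ℝ => mstar n y x.1) (ν y) := by
      intro y
      haveI := hνprob y
      refine ⟨((hmsy y).comp measurable_fst).aestronglyMeasurable, ?_⟩
      rw [HasFiniteIntegral]
      refine lt_of_le_of_lt (regCurve_enorm_le (hmsy y) (hmstar n y)) ?_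
      exact ENNReal.mul_lt_top (by norm_num) (hmstar n y).1.2
    -- integrability of the indicator-weighted composites over PiM
    have hFYu : Integrable (fun p : (ℕ → Ω₁ × ℝ) × (Ω₁ × ℝ) × Θ =>
        χ (T p) * r p.2.2 p.2.1.1) (PiM Q Rinf R) := by
      refine hYint.norm.mono' ((hχ.comp hT).mul hY).aestronglyMeasurable ?_
      filter_upwards with p
      rw [norm_mul]
      calc ‖χ (T p)‖ * ‖r p.2.2 p.2.1.1‖ ≤ 1 * ‖r p.2.2 p.2.1.1‖ :=
            mul_le_mul_of_nonneg_right (hχ01 _) (norm_nonneg _)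
        _ = ‖r p.2.2 p.2.1.1‖ := one_mul _
    have hFgu : Integrable (fun p : (ℕ → Ω₁ × ℝ) × (Ω₁ × ℝ) × Θ =>
        χ (T p) * mstar n (fun i : Fin n => p.1 i) p.2.1.1) (PiM Q Rinf R) := by
      refine hgint.norm.mono' ((hχ.comp hT).mul hgme).aestronglyMeasurable ?_
      filter_upwards with p
      rw [norm_mul]
      calc ‖χ (T p)‖ * ‖mstar n (fun i : Fin n => p.1 i) p.2.1.1‖
          ≤ 1 * ‖mstar n (fun i : Fin n => p.1 i) p.2.1.1‖ :=
            mul_le_mul_of_nonneg_right (hχ01 _) (norm_nonneg _)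
        _ = ‖mstar n (fun i : Fin n => p.1 i) p.2.1.1‖ := one_mul _
    -- indicator rewriting over PiM
    have hindT : ∀ (f : (ℕ → Ω₁ × ℝ) × (Ω₁ × ℝ) × Θ → ℝ)
        (p : (ℕ → Ω₁ × ℝ) × (Ω₁ × ℝ) × Θ),
        (T ⁻¹' B).indicator f p = χ (T p) * f p := by
      intro f p
      by_cases hp : T p ∈ B <;>
        simp [χ, Set.indicator_apply, hp, Set.mem_preimage]
    -- x'-marginalization steps
    have hmapY : ∀ θ, ∫ x', ∫ x, χ ((fun i : Fin n => x' i), x.1) * r θ x.1 ∂(R θ) ∂(Rinf θ)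
        = ∫ x', Φ ((fun i : Fin n => x' i), θ) ∂(Rinf θ) := by
      intro θ
      refine integral_congr_ae (Filter.Eventually.of_forall fun x' => ?_)
      exact keyR θ _
    have hmapmg : ∀ θ,
        ∫ x', Φg ((fun i : Fin n => x' i), θ) ∂(Rinf θ) = ∫ y, Φg (y, θ) ∂(Rn n θ) := by
      intro θ
      rw [← hmap θ]
      exact (integral_map hπ.aemeasurable
        ((hΦgm.comp_measurable (measurable_id.prodMk measurable_const)).aestronglyMeasurable)).symm
    have hmapΦ : ∀ θ,
        ∫ x', Φ ((fun i : Fin n => x' i), θ) ∂(Rinf θ) = ∫ y, Φ (y, θ) ∂(Rn n θ) := by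
      intro θ
      rw [← hmap θ]
      exact (integral_map hπ.aemeasurable
        ((hΦm.comp_measurable (measurable_id.prodMk measurable_const)).aestronglyMeasurable)).symm
    -- inner bind identities
    have hbindΦ : ∀ y, ∫ θ, Φ (y, θ) ∂(postn n y) = ∫ x, χ (y, x.1) * x.2 ∂(ν y) := by
      intro y
      haveI := hνprob y
      exact (integral_bind_kernel (postn n y) R
        (((hχ.comp ((measurable_const (a := y)).prodMk measurable_fst)).mul
          measurable_snd).stronglyMeasurable)
        (hint_mul measurable_snd ((hmstar n y).1) y)).symm
    have hbindΦg : ∀ y, ∫ θ, Φg (y, θ) ∂(postn n y)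
        = ∫ x, χ (y, x.1) * mstar n y x.1 ∂(ν y) := by
      intro y
      haveI := hνprob y
      exact (integral_bind_kernel (postn n y) R
        (((hχ.comp ((measurable_const (a := y)).prodMk measurable_fst)).mul
          ((hmsy y).comp measurable_fst)).stronglyMeasurable)
        (hint_mul ((hmsy y).comp measurable_fst) (hint_mstar y) y)).symm
    -- the chain
    calc ∫ p in T ⁻¹' B, mstar n (fun i : Fin n => p.1 i) p.2.1.1 ∂(PiM Q Rinf R)
        = ∫ p, χ (T p) * mstar n (fun i : Fin n => p.1 i) p.2.1.1 ∂(PiM Q Rinf R) := by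
          rw [← integral_indicator (hT hB)]
          exact integral_congr_ae (Filter.Eventually.of_forall fun p =>
            hindT (fun p => mstar n (fun i : Fin n => p.1 i) p.2.1.1) p)
      _ = ∫ θ, ∫ x', ∫ x, χ ((fun i : Fin n => x' i), x.1)
            * mstar n (fun i : Fin n => x' i) x.1 ∂(R θ) ∂(Rinf θ) ∂Q :=
          integral_PiM _ hFgu
      _ = ∫ θ, ∫ y, Φg (y, θ) ∂(Rn n θ) ∂Q := by
          refine integral_congr_ae (Filter.Eventually.of_forall fun θ => ?_)
          exact hmapmg θ
      _ = ∫ y, ∫ θ, Φg (y, θ) ∂(postn n y) ∂μn := iswap Φg hΦgint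
      _ = ∫ y, ∫ x, χ (y, x.1) * mstar n y x.1 ∂(ν y) ∂μn :=
          integral_congr_ae (Filter.Eventually.of_forall fun y => hbindΦg y)
      _ = ∫ y, ∫ x, χ (y, x.1) * x.2 ∂(ν y) ∂μn :=
          integral_congr_ae (Filter.Eventually.of_forall fun y => (keyM y).symm)
      _ = ∫ y, ∫ θ, Φ (y, θ) ∂(postn n y) ∂μn :=
          integral_congr_ae (Filter.Eventually.of_forall fun y => (hbindΦ y).symm)
      _ = ∫ θ, ∫ y, Φ (y, θ) ∂(Rn n θ) ∂Q := (iswap Φ hΦint).symm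
      _ = ∫ θ, ∫ x', Φ ((fun i : Fin n => x' i), θ) ∂(Rinf θ) ∂Q :=
          integral_congr_ae (Filter.Eventually.of_forall fun θ => (hmapΦ θ).symm)
      _ = ∫ θ, ∫ x', ∫ x, χ ((fun i : Fin n => x' i), x.1) * r θ x.1 ∂(R θ) ∂(Rinf θ) ∂Q :=
          integral_congr_ae (Filter.Eventually.of_forall fun θ => (hmapY θ).symm)
      _ = ∫ p, χ (T p) * r p.2.2 p.2.1.1 ∂(PiM Q Rinf R) := (integral_PiM _ hFYu).symm
      _ = ∫ p in T ⁻¹' B, r p.2.2 p.2.1.1 ∂(PiM Q Rinf R) := by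
          rw [← integral_indicator (hT hB)]
          exact integral_congr_ae (Filter.Eventually.of_forall fun p =>
            (hindT (fun p => r p.2.2 p.2.1.1) p).symm)
  · -- comap measurability of the candidate
    exact StronglyMeasurable.aestronglyMeasurable
      (Measurable.stronglyMeasurable
        (Measurable.comp (hmstar_meas n) (comap_measurable T)))
end

section
/- (Lemma, part (ii)) Let $Y(x',x,\theta) := E_{R_\theta}(p_2 \mid p_1 = x_1)$. Then the regression curve of $p_2$ on $p_1$ with respect to the posterior predictive distribution based on the whole infinite sample equals a conditional expectation under $\Pi_{\mathbb{N}}$: $E_{(R^*_{\mathbb{N},x'})^R}(p_2 \mid p_1 = x_1) = E_{\Pi_{\mathbb{N}}}\big(Y \,\big|\, (\pi'_{\mathbb{N}}, \pi_{1,\mathbb{N}}) = (x', x_1)\big)$, $\Pi_{\mathbb{N}}$-almost everywhere. -/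
open MeasureTheory ProbabilityTheory Filter
open scoped ENNReal

section Aux


variable {Ω₁ : Type*} [MeasurableSpace Ω₁]

lemma ennnorm_real_eq (t : ℝ) :
    (‖t‖₊ : ℝ≥0∞) = ENNReal.ofReal t + ENNReal.ofReal (-t) := by
  rcases le_total 0 t with h | h
  · rw [← enorm_eq_nnnorm, Real.enorm_eq_ofReal_abs, abs_of_nonneg h,
      ENNReal.ofReal_of_nonpos (neg_nonpos.mpr h), add_zero]
  · rw [← enorm_eq_nnnorm, Real.enorm_eq_ofReal_abs, abs_of_nonpos h, ENNReal.ofReal_of_nonpos h, zero_add]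

lemma reg_pos (ν : Measure (Ω₁ × ℝ)) [IsProbabilityMeasure ν]
    (g : Ω₁ → ℝ) (hg : Measurable g) (v : Ω₁ × ℝ → ℝ) (hv : Integrable v ν)
    (heq : ∀ A₁ : Set Ω₁, MeasurableSet A₁ →
      ∫ x in Prod.fst ⁻¹' A₁, v x ∂ν = ∫ x in Prod.fst ⁻¹' A₁, g x.1 ∂ν) :
    ∫⁻ x, ENNReal.ofReal (g x.1) ∂ν ≤ ∫⁻ x, (‖v x‖₊ : ℝ≥0∞) ∂ν := by
  have hvnorm : ENNReal.ofReal (∫ x, ‖v x‖ ∂ν) = ∫⁻ x, (‖v x‖₊ : ℝ≥0∞) ∂ν := by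
    rw [ofReal_integral_eq_lintegral_ofReal hv.norm
      (Eventually.of_forall fun x => norm_nonneg _)]
    simp_rw [ofReal_norm, enorm_eq_nnnorm]
  have hAmeas : ∀ n : ℕ, MeasurableSet {a : Ω₁ | 0 ≤ g a ∧ g a ≤ (n : ℝ)} := by
    intro n
    have : {a : Ω₁ | 0 ≤ g a ∧ g a ≤ (n : ℝ)}
        = {a | 0 ≤ g a} ∩ {a | g a ≤ (n : ℝ)} := rfl
    rw [this]
    exact (measurableSet_le measurable_const hg).inter (measurableSet_le hg measurable_const)
  have hSmeas : ∀ n : ℕ,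
      MeasurableSet (Prod.fst ⁻¹' {a : Ω₁ | 0 ≤ g a ∧ g a ≤ (n : ℝ)} : Set (Ω₁ × ℝ)) :=
    fun n => measurable_fst (hAmeas n)
  have key : ∀ n : ℕ, ∫⁻ x in Prod.fst ⁻¹' {a : Ω₁ | 0 ≤ g a ∧ g a ≤ (n : ℝ)},
      ENNReal.ofReal (g x.1) ∂ν ≤ ∫⁻ x, (‖v x‖₊ : ℝ≥0∞) ∂ν := by
    intro n
    have hbd : ∀ᵐ x ∂ν.restrict (Prod.fst ⁻¹' {a : Ω₁ | 0 ≤ g a ∧ g a ≤ (n : ℝ)}),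
        ‖g x.1‖ ≤ (n : ℝ) := by
      refine ae_restrict_of_forall_mem (hSmeas n) fun x hx => ?_
      have hx' : 0 ≤ g x.1 ∧ g x.1 ≤ (n : ℝ) := hx
      rw [Real.norm_eq_abs, abs_of_nonneg hx'.1]
      exact hx'.2
    have hio : IntegrableOn (fun x : Ω₁ × ℝ => g x.1)
        (Prod.fst ⁻¹' {a : Ω₁ | 0 ≤ g a ∧ g a ≤ (n : ℝ)}) ν :=
      Measure.integrableOn_of_bounded (measure_ne_top _ _)
        ((hg.comp measurable_fst).aestronglyMeasurable) hbd
    have hnn : 0 ≤ᵐ[ν.restrict (Prod.fst ⁻¹' {a : Ω₁ | 0 ≤ g a ∧ g a ≤ (n : ℝ)})]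
        fun x : Ω₁ × ℝ => g x.1 :=
      ae_restrict_of_forall_mem (hSmeas n) fun x hx => hx.1
    calc ∫⁻ x in Prod.fst ⁻¹' {a : Ω₁ | 0 ≤ g a ∧ g a ≤ (n : ℝ)}, ENNReal.ofReal (g x.1) ∂ν
        = ENNReal.ofReal (∫ x in Prod.fst ⁻¹' {a : Ω₁ | 0 ≤ g a ∧ g a ≤ (n : ℝ)}, g x.1 ∂ν) :=
          (ofReal_integral_eq_lintegral_ofReal hio hnn).symm
      _ = ENNReal.ofReal (∫ x in Prod.fst ⁻¹' {a : Ω₁ | 0 ≤ g a ∧ g a ≤ (n : ℝ)}, v x ∂ν) := by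
          rw [heq _ (hAmeas n)]
      _ ≤ ENNReal.ofReal (∫ x, ‖v x‖ ∂ν) := by
          refine ENNReal.ofReal_le_ofReal ?_
          calc ∫ x in Prod.fst ⁻¹' {a : Ω₁ | 0 ≤ g a ∧ g a ≤ (n : ℝ)}, v x ∂ν
              ≤ ∫ x in Prod.fst ⁻¹' {a : Ω₁ | 0 ≤ g a ∧ g a ≤ (n : ℝ)}, ‖v x‖ ∂ν := by
                refine integral_mono_ae hv.integrableOn hv.norm.integrableOn
                  (Eventually.of_forall fun x => ?_)
                exact Real.le_norm_self _
            _ ≤ ∫ x, ‖v x‖ ∂ν := setIntegral_le_integral hv.norm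
                  (Eventually.of_forall fun x => norm_nonneg _)
      _ = ∫⁻ x, (‖v x‖₊ : ℝ≥0∞) ∂ν := hvnorm
  have hmono : Monotone fun n : ℕ =>
      (Prod.fst ⁻¹' {a : Ω₁ | 0 ≤ g a ∧ g a ≤ (n : ℝ)} : Set (Ω₁ × ℝ)).indicator
        fun x => ENNReal.ofReal (g x.1) := by
    intro n m hnm x
    refine Set.indicator_le_indicator_of_subset
      (Set.preimage_mono fun a ha => ?_) (fun _ => zero_le) x
    simp only [Set.mem_setOf_eq] at ha ⊢
    exact ⟨ha.1, ha.2.trans (Nat.cast_le.2 hnm)⟩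
  have hsup : ∀ x : Ω₁ × ℝ,
      (⨆ n : ℕ, (Prod.fst ⁻¹' {a : Ω₁ | 0 ≤ g a ∧ g a ≤ (n : ℝ)}).indicator
        (fun x : Ω₁ × ℝ => ENNReal.ofReal (g x.1)) x) = ENNReal.ofReal (g x.1) := by
    intro x
    rcases le_or_gt 0 (g x.1) with h | h
    · refine le_antisymm (iSup_le fun n => Set.indicator_le_self _ _ x) ?_
      have hx : x ∈ Prod.fst ⁻¹' {a : Ω₁ | 0 ≤ g a ∧ g a ≤ ((⌈g x.1⌉₊ : ℕ) : ℝ)} := by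
        simp only [Set.mem_preimage, Set.mem_setOf_eq]
        exact ⟨h, Nat.le_ceil _⟩
      refine le_trans (le_of_eq ?_) (le_iSup _ ⌈g x.1⌉₊)
      rw [Set.indicator_of_mem hx]
    · rw [ENNReal.ofReal_of_nonpos h.le]
      refine le_antisymm (iSup_le fun n => ?_) (zero_le)
      by_cases hx : x ∈ (Prod.fst ⁻¹' {a : Ω₁ | 0 ≤ g a ∧ g a ≤ ((n : ℕ) : ℝ)} : Set (Ω₁ × ℝ))
      · rw [Set.indicator_of_mem hx, ENNReal.ofReal_of_nonpos h.le]
      · rw [Set.indicator_of_notMem hx]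
  calc ∫⁻ x, ENNReal.ofReal (g x.1) ∂ν
      = ∫⁻ x, ⨆ n : ℕ, (Prod.fst ⁻¹' {a : Ω₁ | 0 ≤ g a ∧ g a ≤ (n : ℝ)}).indicator
          (fun x : Ω₁ × ℝ => ENNReal.ofReal (g x.1)) x ∂ν :=
        lintegral_congr fun x => (hsup x).symm
    _ = ⨆ n : ℕ, ∫⁻ x, (Prod.fst ⁻¹' {a : Ω₁ | 0 ≤ g a ∧ g a ≤ (n : ℝ)}).indicator
          (fun x : Ω₁ × ℝ => ENNReal.ofReal (g x.1)) x ∂ν :=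
        lintegral_iSup (fun n =>
          (ENNReal.measurable_ofReal.comp (hg.comp measurable_fst)).indicator (hSmeas n)) hmono
    _ ≤ ∫⁻ x, (‖v x‖₊ : ℝ≥0∞) ∂ν := by
        refine iSup_le fun n => ?_
        rw [lintegral_indicator (hSmeas n)]
        exact key n

lemma reg_integrable (ν : Measure (Ω₁ × ℝ)) [IsProbabilityMeasure ν]
    (g : Ω₁ → ℝ) (hg : Measurable g) (h : IsRegCurve ν g) :
    Integrable (fun x : Ω₁ × ℝ => g x.1) ν ∧
      ∫⁻ x, (‖g x.1‖₊ : ℝ≥0∞) ∂ν ≤ 2 * ∫⁻ x, (‖x.2‖₊ : ℝ≥0∞) ∂ν := by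
  obtain ⟨hint, heq⟩ := h
  have h1 : ∫⁻ x, ENNReal.ofReal (g x.1) ∂ν ≤ ∫⁻ x, (‖x.2‖₊ : ℝ≥0∞) ∂ν :=
    reg_pos ν g hg _ hint heq
  have h2 : ∫⁻ x, ENNReal.ofReal (-g x.1) ∂ν ≤ ∫⁻ x, (‖x.2‖₊ : ℝ≥0∞) ∂ν := by
    have := reg_pos ν (fun a => -g a) hg.neg (fun x => -x.2) hint.neg
      (fun A₁ hA₁ => by rw [integral_neg, integral_neg, heq _ hA₁])
    simpa using this
  have hnorm : ∫⁻ x, (‖g x.1‖₊ : ℝ≥0∞) ∂ν ≤ 2 * ∫⁻ x, (‖x.2‖₊ : ℝ≥0∞) ∂ν := by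
    calc ∫⁻ x, (‖g x.1‖₊ : ℝ≥0∞) ∂ν
        = ∫⁻ x, (ENNReal.ofReal (g x.1) + ENNReal.ofReal (-g x.1)) ∂ν := by
          simp_rw [ennnorm_real_eq]
      _ = (∫⁻ x, ENNReal.ofReal (g x.1) ∂ν) + ∫⁻ x, ENNReal.ofReal (-g x.1) ∂ν :=
          lintegral_add_left (ENNReal.measurable_ofReal.comp (hg.comp measurable_fst)) _
      _ ≤ (∫⁻ x, (‖x.2‖₊ : ℝ≥0∞) ∂ν) + ∫⁻ x, (‖x.2‖₊ : ℝ≥0∞) ∂ν := add_le_add h1 h2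
      _ = 2 * ∫⁻ x, (‖x.2‖₊ : ℝ≥0∞) ∂ν := (two_mul _).symm
  refine ⟨⟨(hg.comp measurable_fst).aestronglyMeasurable, ?_⟩, hnorm⟩
  have hfin : ∫⁻ x, (‖x.2‖₊ : ℝ≥0∞) ∂ν < ⊤ := hint.2
  exact lt_of_le_of_lt hnorm (ENNReal.mul_lt_top (by norm_num) hfin)

lemma lintegral_snd_prod {β γ : Type*} [MeasurableSpace β] [MeasurableSpace γ]
    (μ : Measure β) [IsProbabilityMeasure μ] (ν : Measure γ) [SFinite ν]
    {f : γ → ℝ≥0∞} (hf : Measurable f) :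
    ∫⁻ y : β × γ, f y.2 ∂(μ.prod ν) = ∫⁻ x, f x ∂ν := by
  rw [lintegral_prod (fun y : β × γ => f y.2) ((hf.comp measurable_snd).aemeasurable)]
  simp [lintegral_const, measure_univ]

lemma integrable_snd_prod {β γ : Type*} [MeasurableSpace β] [MeasurableSpace γ]
    {μ : Measure β} [IsProbabilityMeasure μ] {ν : Measure γ} [SFinite ν]
    {f : γ → ℝ} (hfm : Measurable f) (hf : Integrable f ν) :
    Integrable (fun y : β × γ => f y.2) (μ.prod ν) := by
  refine ⟨hf.aestronglyMeasurable.comp_snd, ?_⟩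
  have h : ∫⁻ y : β × γ, (‖f y.2‖₊ : ℝ≥0∞) ∂(μ.prod ν) = ∫⁻ x, (‖f x‖₊ : ℝ≥0∞) ∂ν :=
    lintegral_snd_prod μ ν hfm.enorm
  have h2 := hf.2
  simp only [HasFiniteIntegral, enorm_eq_nnnorm] at h2 ⊢
  rwa [h]


end Aux

/-- Lemma, part (ii): with `Y(x',x,θ) := E_{R_θ}(p₂ | p₁ = x₁)`, the regression
curve of `p₂` on `p₁` with respect to the posterior predictive distribution based on the whole
infinite sample is, `Π_ℕ`-a.e., the conditional expectation of `Y` under `Π_ℕ` given the whole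
sample and the first coordinate of the new observation. -/
theorem stmt_4 {Θ Ω₁ : Type*} [MeasurableSpace Θ] [MeasurableSpace Ω₁]
    (Q : Measure Θ) [IsProbabilityMeasure Q]
    (R : Kernel Θ (Ω₁ × ℝ)) [IsMarkovKernel R]
    (hsq : ∫⁻ θ, ∫⁻ x, ENNReal.ofReal (x.2 ^ 2) ∂(R θ) ∂Q ≠ ⊤)
    (Rinf : Kernel Θ (ℕ → Ω₁ × ℝ)) [IsMarkovKernel Rinf]
    (hRinf : ∀ θ n, (Rinf θ).map (fun x (i : Fin n) => x i) = Measure.pi fun _ : Fin n => R θ)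
    (r : Θ → Ω₁ → ℝ) (hr_meas : Measurable (Function.uncurry r))
    (hr : ∀ θ, IsRegCurve (R θ) (r θ))
    (postinf : Kernel (ℕ → Ω₁ × ℝ) Θ) [IsMarkovKernel postinf]
    (hpostinf : IsPosterior Q Rinf postinf)
    (mstarinf : (ℕ → Ω₁ × ℝ) → Ω₁ → ℝ)
    (hmstarinf_meas : Measurable (Function.uncurry mstarinf))
    (hmstarinf : ∀ x', IsRegCurve (Measure.bind (postinf x') fun θ => R θ) (mstarinf x')) :
    (fun p : (ℕ → Ω₁ × ℝ) × (Ω₁ × ℝ) × Θ => mstarinf p.1 p.2.1.1)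
      =ᵐ[PiM Q Rinf R]
    (PiM Q Rinf R)[fun p : (ℕ → Ω₁ × ℝ) × (Ω₁ × ℝ) × Θ => r p.2.2 p.2.1.1 |
      MeasurableSpace.comap (fun p : (ℕ → Ω₁ × ℝ) × (Ω₁ × ℝ) × Θ =>
        (p.1, p.2.1.1)) inferInstance] := by
  classical
  have hPiM : PiM Q Rinf R = (Q ⊗ₘ (Rinf ×ₖ R)).map
      (fun p : Θ × ((ℕ → Ω₁ × ℝ) × (Ω₁ × ℝ)) => (p.2.1, p.2.2, p.1)) := rfl
  have hmap_meas : Measurable fun p : Θ × ((ℕ → Ω₁ × ℝ) × (Ω₁ × ℝ)) =>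
      ((p.2.1, p.2.2, p.1) : (ℕ → Ω₁ × ℝ) × (Ω₁ × ℝ) × Θ) :=
    (measurable_snd.fst).prodMk ((measurable_snd.snd).prodMk measurable_fst)
  let e : (Θ × ((ℕ → Ω₁ × ℝ) × (Ω₁ × ℝ))) ≃ᵐ ((ℕ → Ω₁ × ℝ) × (Ω₁ × ℝ) × Θ) :=
    MeasurableEquiv.prodComm.trans MeasurableEquiv.prodAssoc
  have he : (fun p : Θ × ((ℕ → Ω₁ × ℝ) × (Ω₁ × ℝ)) =>
      ((p.2.1, p.2.2, p.1) : (ℕ → Ω₁ × ℝ) × (Ω₁ × ℝ) × Θ)) = ⇑e := funext fun p => rfl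
  have hez : ∀ z : Θ × ((ℕ → Ω₁ × ℝ) × (Ω₁ × ℝ)),
      e z = ((z.2.1, z.2.2, z.1) : (ℕ → Ω₁ × ℝ) × (Ω₁ × ℝ) × Θ) := fun z => rfl
  haveI : IsProbabilityMeasure (PiM Q Rinf R) := by
    rw [hPiM]; exact Measure.isProbabilityMeasure_map hmap_meas.aemeasurable
  -- moment bounds
  have hCmeas : Measurable fun θ => ∫⁻ x, (‖x.2‖₊ : ℝ≥0∞) ∂(R θ) :=
    Measurable.lintegral_kernel measurable_snd.enorm
  have hCfin : ∫⁻ θ, ∫⁻ x, (‖x.2‖₊ : ℝ≥0∞) ∂(R θ) ∂Q ≠ ⊤ := by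
    refine ne_top_of_le_ne_top (ENNReal.add_ne_top.2 ⟨hsq, ENNReal.one_ne_top⟩) ?_
    have hb : ∀ θ, ∫⁻ x, (‖x.2‖₊ : ℝ≥0∞) ∂(R θ)
        ≤ (∫⁻ x, ENNReal.ofReal (x.2 ^ 2) ∂(R θ)) + 1 := by
      intro θ
      calc ∫⁻ x, (‖x.2‖₊ : ℝ≥0∞) ∂(R θ)
          ≤ ∫⁻ x, (ENNReal.ofReal (x.2 ^ 2) + 1) ∂(R θ) := by
            refine lintegral_mono fun x => ?_
            rw [← enorm_eq_nnnorm, Real.enorm_eq_ofReal_abs, ← ENNReal.ofReal_one,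
              ← ENNReal.ofReal_add (by positivity) zero_le_one]
            exact ENNReal.ofReal_le_ofReal (by nlinarith [abs_nonneg x.2, sq_abs x.2])
        _ = (∫⁻ x, ENNReal.ofReal (x.2 ^ 2) ∂(R θ)) + 1 := by
            rw [lintegral_add_right _ measurable_const]; simp
    calc ∫⁻ θ, ∫⁻ x, (‖x.2‖₊ : ℝ≥0∞) ∂(R θ) ∂Q
        ≤ ∫⁻ θ, ((∫⁻ x, ENNReal.ofReal (x.2 ^ 2) ∂(R θ)) + 1) ∂Q := lintegral_mono hb
      _ = (∫⁻ θ, ∫⁻ x, ENNReal.ofReal (x.2 ^ 2) ∂(R θ) ∂Q) + 1 := by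
          rw [lintegral_add_right _ measurable_const]; simp
  -- per-θ regression facts
  have hrθmeas : ∀ θ, Measurable (r θ) := fun θ => hr_meas.of_uncurry_left
  have hrreg := fun θ => reg_integrable (R θ) (r θ) (hrθmeas θ) (hr θ)
  -- posterior predictive kernel
  have hmθmeas : ∀ x', Measurable (mstarinf x') := fun x' => hmstarinf_meas.of_uncurry_left
  have hmreg : ∀ x', IsRegCurve ((R ∘ₖ postinf) x') (mstarinf x') := fun x' => by
    rw [Kernel.comp_apply]; exact hmstarinf x'
  have hmint := fun x' => reg_integrable ((R ∘ₖ postinf) x') (mstarinf x') (hmθmeas x') (hmreg x')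
  haveI hμ'prob : IsProbabilityMeasure (Q.bind fun θ => Rinf θ) := by
    constructor
    rw [Measure.bind_apply MeasurableSet.univ (Kernel.measurable Rinf).aemeasurable]
    simp
  -- posterior joint equality
  have hswap : (Q ⊗ₘ Rinf).map Prod.swap = (Q.bind fun θ => Rinf θ) ⊗ₘ postinf := by
    haveI : IsProbabilityMeasure ((Q ⊗ₘ Rinf).map Prod.swap) :=
      Measure.isProbabilityMeasure_map measurable_swap.aemeasurable
    refine ext_of_generate_finite _ generateFrom_prod.symm isPiSystem_prod ?_ (by simp)
    rintro _ ⟨A', hA', T, hT, rfl⟩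
    replace hA' : MeasurableSet A' := hA'
    replace hT : MeasurableSet T := hT
    rw [Measure.map_apply measurable_swap (hA'.prod hT), Set.preimage_swap_prod,
      Measure.compProd_apply_prod hT hA', Measure.compProd_apply_prod hA' hT]
    exact hpostinf A' T hA' hT
  -- the (sample, new observation) joint equality
  have hρ : (Q ⊗ₘ (Rinf ×ₖ R)).map Prod.snd
      = (Q.bind fun θ => Rinf θ) ⊗ₘ (R ∘ₖ postinf) := by
    haveI : IsProbabilityMeasure ((Q ⊗ₘ (Rinf ×ₖ R)).map Prod.snd) :=
      Measure.isProbabilityMeasure_map measurable_snd.aemeasurable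
    refine ext_of_generate_finite _ generateFrom_prod.symm isPiSystem_prod ?_ (by simp)
    rintro _ ⟨A', hA', A, hA, rfl⟩
    replace hA' : MeasurableSet A' := hA'
    replace hA : MeasurableSet A := hA
    have hG : Measurable (fun q : (ℕ → Ω₁ × ℝ) × Θ =>
        (Prod.fst ⁻¹' A' : Set ((ℕ → Ω₁ × ℝ) × Θ)).indicator (fun q => R q.2 A) q) :=
      ((Kernel.measurable_coe R hA).comp measurable_snd).indicator (measurable_fst hA')
    have h1 : ∫⁻ q, (Prod.fst ⁻¹' A' : Set ((ℕ → Ω₁ × ℝ) × Θ)).indicator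
          (fun q => R q.2 A) q ∂((Q ⊗ₘ Rinf).map Prod.swap)
        = ∫⁻ θ, R θ A * Rinf θ A' ∂Q := by
      have hGswap : Measurable fun p : Θ × (ℕ → Ω₁ × ℝ) =>
          (Prod.fst ⁻¹' A' : Set ((ℕ → Ω₁ × ℝ) × Θ)).indicator
            (fun q => R q.2 A) (Prod.swap p) := hG.comp measurable_swap
      rw [lintegral_map hG measurable_swap, Measure.lintegral_compProd hGswap]
      refine lintegral_congr fun θ => ?_
      have hpt : ∀ x' : ℕ → Ω₁ × ℝ,
          (Prod.fst ⁻¹' A' : Set ((ℕ → Ω₁ × ℝ) × Θ)).indicator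
            (fun q => R q.2 A) (Prod.swap (θ, x'))
          = A'.indicator (fun _ => R θ A) x' := by
        intro x'
        simp [Set.indicator_apply, Prod.swap_prod_mk]
      calc ∫⁻ x', (Prod.fst ⁻¹' A' : Set ((ℕ → Ω₁ × ℝ) × Θ)).indicator
            (fun q => R q.2 A) (Prod.swap (θ, x')) ∂(Rinf θ)
          = ∫⁻ x', A'.indicator (fun _ => R θ A) x' ∂(Rinf θ) := lintegral_congr hpt
        _ = R θ A * Rinf θ A' := lintegral_indicator_const hA' _
    have h2 : ∫⁻ q, (Prod.fst ⁻¹' A' : Set ((ℕ → Ω₁ × ℝ) × Θ)).indicator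
          (fun q => R q.2 A) q ∂((Q.bind fun θ => Rinf θ) ⊗ₘ postinf)
        = ∫⁻ x' in A', (R ∘ₖ postinf) x' A ∂(Q.bind fun θ => Rinf θ) := by
      rw [Measure.lintegral_compProd hG]
      have hpt : ∀ x' : ℕ → Ω₁ × ℝ,
          ∫⁻ θ, (Prod.fst ⁻¹' A' : Set ((ℕ → Ω₁ × ℝ) × Θ)).indicator
            (fun q => R q.2 A) (x', θ) ∂(postinf x')
          = A'.indicator (fun x' => (R ∘ₖ postinf) x' A) x' := by
        intro x'
        by_cases hx : x' ∈ A'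
        · simp only [Set.indicator_apply, Set.mem_preimage, if_pos hx,
            Kernel.comp_apply' _ _ _ hA]
        · simp [Set.indicator_apply, hx]
      simp_rw [hpt]
      rw [lintegral_indicator hA']
    calc ((Q ⊗ₘ (Rinf ×ₖ R)).map Prod.snd) (A' ×ˢ A)
        = ∫⁻ θ, R θ A * Rinf θ A' ∂Q := by
          rw [Measure.map_apply measurable_snd (hA'.prod hA),
            Measure.compProd_apply (measurable_snd (hA'.prod hA))]
          refine lintegral_congr fun θ => ?_
          have hpre : (Prod.mk θ ⁻¹' (Prod.snd ⁻¹' (A' ×ˢ A))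
              : Set ((ℕ → Ω₁ × ℝ) × (Ω₁ × ℝ))) = A' ×ˢ A := rfl
          rw [hpre, Kernel.prod_apply, Measure.prod_prod, mul_comm]
      _ = ∫⁻ x' in A', (R ∘ₖ postinf) x' A ∂(Q.bind fun θ => Rinf θ) := by
          rw [← h1, hswap, h2]
      _ = ((Q.bind fun θ => Rinf θ) ⊗ₘ (R ∘ₖ postinf)) (A' ×ˢ A) :=
          (Measure.compProd_apply_prod hA' hA).symm
  -- integrability over the base compProd measure
  have hmeasR0 : Measurable fun z : Θ × ((ℕ → Ω₁ × ℝ) × (Ω₁ × ℝ)) => r z.1 z.2.2.1 :=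
    hr_meas.comp (measurable_fst.prodMk measurable_snd.snd.fst)
  have hIntR : Integrable (fun z : Θ × ((ℕ → Ω₁ × ℝ) × (Ω₁ × ℝ)) => r z.1 z.2.2.1)
      (Q ⊗ₘ (Rinf ×ₖ R)) := by
    refine ⟨hmeasR0.aestronglyMeasurable, ?_⟩
    simp only [HasFiniteIntegral]
    rw [Measure.lintegral_compProd hmeasR0.enorm]
    calc ∫⁻ θ, ∫⁻ y, (‖r θ y.2.1‖₊ : ℝ≥0∞) ∂((Rinf ×ₖ R) θ) ∂Q
        = ∫⁻ θ, ∫⁻ x, (‖r θ x.1‖₊ : ℝ≥0∞) ∂(R θ) ∂Q := by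
          refine lintegral_congr fun θ => ?_
          rw [Kernel.prod_apply]
          exact lintegral_snd_prod (f := fun x : Ω₁ × ℝ => (‖r θ x.1‖₊ : ℝ≥0∞)) _ _
            ((hrθmeas θ).comp measurable_fst).enorm
      _ ≤ ∫⁻ θ, 2 * ∫⁻ x, (‖x.2‖₊ : ℝ≥0∞) ∂(R θ) ∂Q :=
          lintegral_mono fun θ => (hrreg θ).2
      _ = 2 * ∫⁻ θ, ∫⁻ x, (‖x.2‖₊ : ℝ≥0∞) ∂(R θ) ∂Q := lintegral_const_mul 2 hCmeas
      _ < ⊤ := ENNReal.mul_lt_top (by norm_num) hCfin.lt_top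
  have hIntX : Integrable (fun z : Θ × ((ℕ → Ω₁ × ℝ) × (Ω₁ × ℝ)) => z.2.2.2)
      (Q ⊗ₘ (Rinf ×ₖ R)) := by
    refine ⟨measurable_snd.snd.snd.aestronglyMeasurable, ?_⟩
    simp only [HasFiniteIntegral]
    rw [Measure.lintegral_compProd measurable_snd.snd.snd.enorm]
    calc ∫⁻ θ, ∫⁻ y, (‖y.2.2‖₊ : ℝ≥0∞) ∂((Rinf ×ₖ R) θ) ∂Q
        = ∫⁻ θ, ∫⁻ x, (‖x.2‖₊ : ℝ≥0∞) ∂(R θ) ∂Q := by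
          refine lintegral_congr fun θ => ?_
          rw [Kernel.prod_apply]
          exact lintegral_snd_prod (f := fun x : Ω₁ × ℝ => (‖x.2‖₊ : ℝ≥0∞)) _ _
            measurable_snd.enorm
      _ < ⊤ := hCfin.lt_top
  have hmeasM0 : Measurable fun y : (ℕ → Ω₁ × ℝ) × (Ω₁ × ℝ) => mstarinf y.1 y.2.1 :=
    hmstarinf_meas.comp (measurable_fst.prodMk measurable_snd.fst)
  have hIntX' : Integrable (fun y : (ℕ → Ω₁ × ℝ) × (Ω₁ × ℝ) => y.2.2)
      ((Q.bind fun θ => Rinf θ) ⊗ₘ (R ∘ₖ postinf)) := by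
    rw [← hρ]
    exact (integrable_map_measure measurable_snd.snd.aestronglyMeasurable
      measurable_snd.aemeasurable).2 hIntX
  have hIntM' : Integrable (fun y : (ℕ → Ω₁ × ℝ) × (Ω₁ × ℝ) => mstarinf y.1 y.2.1)
      ((Q.bind fun θ => Rinf θ) ⊗ₘ (R ∘ₖ postinf)) := by
    refine ⟨hmeasM0.aestronglyMeasurable, ?_⟩
    simp only [HasFiniteIntegral]
    rw [Measure.lintegral_compProd hmeasM0.enorm]
    have hfinX : ∫⁻ z, (‖(fun z : Θ × ((ℕ → Ω₁ × ℝ) × (Ω₁ × ℝ)) => z.2.2.2) z‖₊ : ℝ≥0∞)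
        ∂(Q ⊗ₘ (Rinf ×ₖ R)) < ⊤ := hIntX.2
    calc ∫⁻ x', ∫⁻ x, (‖mstarinf x' x.1‖₊ : ℝ≥0∞) ∂((R ∘ₖ postinf) x') ∂(Q.bind fun θ => Rinf θ)
        ≤ ∫⁻ x', 2 * ∫⁻ x, (‖x.2‖₊ : ℝ≥0∞) ∂((R ∘ₖ postinf) x') ∂(Q.bind fun θ => Rinf θ) :=
          lintegral_mono fun x' => (hmint x').2
      _ = 2 * ∫⁻ x', ∫⁻ x, (‖x.2‖₊ : ℝ≥0∞) ∂((R ∘ₖ postinf) x') ∂(Q.bind fun θ => Rinf θ) :=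
          lintegral_const_mul 2 (Measurable.lintegral_kernel measurable_snd.enorm)
      _ = 2 * ∫⁻ y, (‖y.2.2‖₊ : ℝ≥0∞) ∂((Q.bind fun θ => Rinf θ) ⊗ₘ (R ∘ₖ postinf)) := by
          simp only [← enorm_eq_nnnorm]
          rw [Measure.lintegral_compProd measurable_snd.snd.enorm]
      _ = 2 * ∫⁻ z, (‖z.2.2.2‖₊ : ℝ≥0∞) ∂(Q ⊗ₘ (Rinf ×ₖ R)) := by
          simp only [← enorm_eq_nnnorm]
          rw [← hρ, lintegral_map measurable_snd.snd.enorm measurable_snd]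
      _ < ⊤ := ENNReal.mul_lt_top (by norm_num) hfinX
  have hIntM0 : Integrable (fun z : Θ × ((ℕ → Ω₁ × ℝ) × (Ω₁ × ℝ)) => mstarinf z.2.1 z.2.2.1)
      (Q ⊗ₘ (Rinf ×ₖ R)) := by
    have h := hIntM'
    rw [← hρ] at h
    exact (integrable_map_measure hmeasM0.aestronglyMeasurable measurable_snd.aemeasurable).1 h
  -- transfer to PiM
  have hIntRPi : Integrable (fun p : (ℕ → Ω₁ × ℝ) × (Ω₁ × ℝ) × Θ => r p.2.2 p.2.1.1)
      (PiM Q Rinf R) := by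
    rw [hPiM, he]
    exact (integrable_map_equiv e _).2 hIntR
  have hIntMPi : Integrable (fun p : (ℕ → Ω₁ × ℝ) × (Ω₁ × ℝ) × Θ => mstarinf p.1 p.2.1.1)
      (PiM Q Rinf R) := by
    rw [hPiM, he]
    exact (integrable_map_equiv e _).2 hIntM0
  -- the key identity for all measurable B
  have hqmeas : Measurable fun z : Θ × ((ℕ → Ω₁ × ℝ) × (Ω₁ × ℝ)) => (z.2.1, z.2.2.1) :=
    measurable_snd.fst.prodMk measurable_snd.snd.fst
  have hq2meas : Measurable fun y : (ℕ → Ω₁ × ℝ) × (Ω₁ × ℝ) => (y.1, y.2.1) :=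
    measurable_fst.prodMk measurable_snd.fst
  have main : ∀ B : Set ((ℕ → Ω₁ × ℝ) × Ω₁), MeasurableSet B →
      ∫ z, ((fun z : Θ × ((ℕ → Ω₁ × ℝ) × (Ω₁ × ℝ)) => (z.2.1, z.2.2.1)) ⁻¹' B).indicator
          (fun z => mstarinf z.2.1 z.2.2.1) z ∂(Q ⊗ₘ (Rinf ×ₖ R))
      = ∫ z, ((fun z : Θ × ((ℕ → Ω₁ × ℝ) × (Ω₁ × ℝ)) => (z.2.1, z.2.2.1)) ⁻¹' B).indicator
          (fun z => r z.1 z.2.2.1) z ∂(Q ⊗ₘ (Rinf ×ₖ R)) := by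
    intro B hB
    set S : Set (Θ × ((ℕ → Ω₁ × ℝ) × (Ω₁ × ℝ))) :=
      (fun z : Θ × ((ℕ → Ω₁ × ℝ) × (Ω₁ × ℝ)) => (z.2.1, z.2.2.1)) ⁻¹' B with hSdef
    set S₂ : Set ((ℕ → Ω₁ × ℝ) × (Ω₁ × ℝ)) :=
      (fun y : (ℕ → Ω₁ × ℝ) × (Ω₁ × ℝ) => (y.1, y.2.1)) ⁻¹' B with hS₂def
    have hS : MeasurableSet S := hqmeas hB
    have hS₂ : MeasurableSet S₂ := hq2meas hB
    have stepR : ∫ z, S.indicator (fun z => r z.1 z.2.2.1) z ∂(Q ⊗ₘ (Rinf ×ₖ R))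
        = ∫ z, S.indicator (fun z : Θ × ((ℕ → Ω₁ × ℝ) × (Ω₁ × ℝ)) => z.2.2.2) z
            ∂(Q ⊗ₘ (Rinf ×ₖ R)) := by
      rw [Measure.integral_compProd (hIntR.indicator hS),
        Measure.integral_compProd (hIntX.indicator hS)]
      refine integral_congr_ae (Eventually.of_forall fun θ => ?_)
      beta_reduce
      have e1 : (fun y : (ℕ → Ω₁ × ℝ) × (Ω₁ × ℝ) =>
          S.indicator (fun z => r z.1 z.2.2.1) (θ, y))
          = fun y => S₂.indicator (fun y : (ℕ → Ω₁ × ℝ) × (Ω₁ × ℝ) => r θ y.2.1) y := by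
        funext y
        simp [Set.indicator_apply, hSdef, hS₂def]
      have e1' : (fun y : (ℕ → Ω₁ × ℝ) × (Ω₁ × ℝ) =>
          S.indicator (fun z : Θ × ((ℕ → Ω₁ × ℝ) × (Ω₁ × ℝ)) => z.2.2.2) (θ, y))
          = fun y => S₂.indicator (fun y : (ℕ → Ω₁ × ℝ) × (Ω₁ × ℝ) => y.2.2) y := by
        funext y
        simp [Set.indicator_apply, hSdef, hS₂def]
      rw [e1, e1', Kernel.prod_apply]
      have i1 : Integrable (fun y : (ℕ → Ω₁ × ℝ) × (Ω₁ × ℝ) =>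
          S₂.indicator (fun y : (ℕ → Ω₁ × ℝ) × (Ω₁ × ℝ) => r θ y.2.1) y)
          ((Rinf θ).prod (R θ)) :=
        (integrable_snd_prod ((hrθmeas θ).comp measurable_fst) (hrreg θ).1).indicator hS₂
      have i2 : Integrable (fun y : (ℕ → Ω₁ × ℝ) × (Ω₁ × ℝ) =>
          S₂.indicator (fun y : (ℕ → Ω₁ × ℝ) × (Ω₁ × ℝ) => y.2.2) y)
          ((Rinf θ).prod (R θ)) :=
        (integrable_snd_prod measurable_snd (hr θ).1).indicator hS₂
      rw [integral_prod _ i1, integral_prod _ i2]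
      refine integral_congr_ae (Eventually.of_forall fun x' => ?_)
      beta_reduce
      have e2 : (fun x : Ω₁ × ℝ =>
          S₂.indicator (fun y : (ℕ → Ω₁ × ℝ) × (Ω₁ × ℝ) => r θ y.2.1) (x', x))
          = fun x => (Prod.fst ⁻¹' (Prod.mk x' ⁻¹' B)).indicator
              (fun x : Ω₁ × ℝ => r θ x.1) x := by
        funext x
        simp [Set.indicator_apply, hSdef, hS₂def]
      have e2' : (fun x : Ω₁ × ℝ =>
          S₂.indicator (fun y : (ℕ → Ω₁ × ℝ) × (Ω₁ × ℝ) => y.2.2) (x', x))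
          = fun x => (Prod.fst ⁻¹' (Prod.mk x' ⁻¹' B)).indicator
              (fun x : Ω₁ × ℝ => x.2) x := by
        funext x
        simp [Set.indicator_apply, hSdef, hS₂def]
      rw [e2, e2', integral_indicator (measurable_fst (measurable_prodMk_left hB)),
        integral_indicator (measurable_fst (measurable_prodMk_left hB))]
      exact ((hr θ).2 _ (measurable_prodMk_left hB)).symm
    have stepM : ∫ z, S.indicator (fun z : Θ × ((ℕ → Ω₁ × ℝ) × (Ω₁ × ℝ)) => z.2.2.2) z
          ∂(Q ⊗ₘ (Rinf ×ₖ R))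
        = ∫ z, S.indicator (fun z => mstarinf z.2.1 z.2.2.1) z ∂(Q ⊗ₘ (Rinf ×ₖ R)) := by
      have hmap1 : ∫ z, S.indicator (fun z : Θ × ((ℕ → Ω₁ × ℝ) × (Ω₁ × ℝ)) => z.2.2.2) z
            ∂(Q ⊗ₘ (Rinf ×ₖ R))
          = ∫ y, S₂.indicator (fun y : (ℕ → Ω₁ × ℝ) × (Ω₁ × ℝ) => y.2.2) y
              ∂((Q ⊗ₘ (Rinf ×ₖ R)).map Prod.snd) := by
        rw [integral_map measurable_snd.aemeasurable
          (measurable_snd.snd.indicator hS₂).aestronglyMeasurable]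
        refine integral_congr_ae (Eventually.of_forall fun z => ?_)
        simp [Set.indicator_apply, hSdef, hS₂def]
      have hmap2 : ∫ z, S.indicator (fun z => mstarinf z.2.1 z.2.2.1) z ∂(Q ⊗ₘ (Rinf ×ₖ R))
          = ∫ y, S₂.indicator (fun y : (ℕ → Ω₁ × ℝ) × (Ω₁ × ℝ) => mstarinf y.1 y.2.1) y
              ∂((Q ⊗ₘ (Rinf ×ₖ R)).map Prod.snd) := by
        rw [integral_map measurable_snd.aemeasurable
          (hmeasM0.indicator hS₂).aestronglyMeasurable]
        refine integral_congr_ae (Eventually.of_forall fun z => ?_)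
        simp [Set.indicator_apply, hSdef, hS₂def]
      rw [hmap1, hmap2, hρ]
      rw [Measure.integral_compProd (hIntX'.indicator hS₂),
        Measure.integral_compProd (hIntM'.indicator hS₂)]
      refine integral_congr_ae (Eventually.of_forall fun x' => ?_)
      beta_reduce
      have e3 : (fun x : Ω₁ × ℝ =>
          S₂.indicator (fun y : (ℕ → Ω₁ × ℝ) × (Ω₁ × ℝ) => y.2.2) (x', x))
          = fun x => (Prod.fst ⁻¹' (Prod.mk x' ⁻¹' B)).indicator
              (fun x : Ω₁ × ℝ => x.2) x := by
        funext x
        simp [Set.indicator_apply, hSdef, hS₂def]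
      have e4 : (fun x : Ω₁ × ℝ =>
          S₂.indicator (fun y : (ℕ → Ω₁ × ℝ) × (Ω₁ × ℝ) => mstarinf y.1 y.2.1) (x', x))
          = fun x => (Prod.fst ⁻¹' (Prod.mk x' ⁻¹' B)).indicator
              (fun x : Ω₁ × ℝ => mstarinf x' x.1) x := by
        funext x
        simp [Set.indicator_apply, hSdef, hS₂def]
      rw [e3, e4, integral_indicator (measurable_fst (measurable_prodMk_left hB)),
        integral_indicator (measurable_fst (measurable_prodMk_left hB))]
      exact (hmreg x').2 _ (measurable_prodMk_left hB)
    exact stepM.symm.trans stepR.symm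
  -- apply uniqueness of conditional expectation
  have hproj : Measurable fun p : (ℕ → Ω₁ × ℝ) × (Ω₁ × ℝ) × Θ => (p.1, p.2.1.1) :=
    measurable_fst.prodMk measurable_snd.fst.fst
  refine ae_eq_condExp_of_forall_setIntegral_eq hproj.comap_le hIntRPi
    (fun s _ _ => hIntMPi.integrableOn) ?_ ?_
  · rintro s ⟨B, hB, rfl⟩ -
    rw [← integral_indicator (hproj hB), ← integral_indicator (hproj hB)]
    rw [hPiM, he, integral_map_equiv, integral_map_equiv]
    calc ∫ z, (((fun p : (ℕ → Ω₁ × ℝ) × (Ω₁ × ℝ) × Θ => (p.1, p.2.1.1)) ⁻¹' B).indicator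
            (fun p => mstarinf p.1 p.2.1.1)) (e z) ∂(Q ⊗ₘ (Rinf ×ₖ R))
        = ∫ z, ((fun z : Θ × ((ℕ → Ω₁ × ℝ) × (Ω₁ × ℝ)) => (z.2.1, z.2.2.1)) ⁻¹' B).indicator
            (fun z => mstarinf z.2.1 z.2.2.1) z ∂(Q ⊗ₘ (Rinf ×ₖ R)) := by
          refine integral_congr_ae (Eventually.of_forall fun z => ?_)
          simp [Set.indicator_apply, hez]
      _ = ∫ z, ((fun z : Θ × ((ℕ → Ω₁ × ℝ) × (Ω₁ × ℝ)) => (z.2.1, z.2.2.1)) ⁻¹' B).indicator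
            (fun z => r z.1 z.2.2.1) z ∂(Q ⊗ₘ (Rinf ×ₖ R)) := main B hB
      _ = ∫ z, (((fun p : (ℕ → Ω₁ × ℝ) × (Ω₁ × ℝ) × Θ => (p.1, p.2.1.1)) ⁻¹' B).indicator
            (fun p => r p.2.2 p.2.1.1)) (e z) ∂(Q ⊗ₘ (Rinf ×ₖ R)) := by
          refine integral_congr_ae (Eventually.of_forall fun z => ?_)
          simp [Set.indicator_apply, hez]
  · refine ⟨fun p => mstarinf p.1 p.2.1.1, ?_, EventuallyEq.rfl⟩
    exact Measurable.stronglyMeasurable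
      (hmstarinf_meas.comp (comap_measurable
        (fun p : (ℕ → Ω₁ × ℝ) × (Ω₁ × ℝ) × Θ => (p.1, p.2.1.1))))
end

section
/- Assume (i) $(\Omega_1,\mathcal{A}_1)$ is a standard Borel space, (ii) $\Theta$ is a Borel subset of a Polish space with its Borel $\sigma$-field, and (iii) $\{R_\theta : \theta \in \Theta\}$ is identifiable. Then the regression curve with respect to the posterior predictive distribution based on the whole infinite sample equals the sampling regression curve: $E_{(R^*_{\mathbb{N},x'})^R}(p_2 \mid p_1 = x_1) = E_{R_\theta}(p_2 \mid p_1 = x_1)$ for $\Pi_{\mathbb{N}}$-almost every $(x',x,\theta)$, where $x_1$ is the first coordinate of $x$. -/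
open MeasureTheory ProbabilityTheory Filter Topology
open scoped ENNReal

section Helpers

variable {E : Type*} [MeasurableSpace E]

/-- One-coordinate cylinder of a constant finite product measure. -/
lemma pi_eval_preimage {n : ℕ} (μ : Measure E)
    [IsProbabilityMeasure μ] (a : Fin n) {A : Set E} (hA : MeasurableSet A) :
    Measure.pi (fun _ : Fin n => μ) ((fun y => y a) ⁻¹' A) = μ A := by
  classical
  rw [show ((fun y : Fin n → E => y a) ⁻¹' A) = Set.pi Set.univ
      (Function.update (fun _ => Set.univ) a A) from Set.eval_preimage, Measure.pi_pi]
  have h : ∀ i : Fin n, μ (Function.update (fun _ => (Set.univ : Set E)) a A i)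
      = Function.update (fun _ : Fin n => (1:ℝ≥0∞)) a (μ A) i := by
    intro i
    by_cases h : i = a
    · subst h; simp
    · simp [Function.update_of_ne h]
  rw [Finset.prod_congr rfl (fun i _ => h i), Finset.prod_update_of_mem (Finset.mem_univ a)]
  simp

/-- Two-coordinate cylinder of a constant finite product measure. -/
lemma pi_eval_preimage_two {n : ℕ} (μ : Measure E)
    [IsProbabilityMeasure μ] {a b : Fin n} (hab : a ≠ b) {A B : Set E}
    (hA : MeasurableSet A) (hB : MeasurableSet B) :
    Measure.pi (fun _ : Fin n => μ)
      ((fun y => y a) ⁻¹' A ∩ (fun y => y b) ⁻¹' B) = μ A * μ B := by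
  classical
  rw [show ((fun y : Fin n → E => y a) ⁻¹' A) = Set.pi Set.univ
      (Function.update (fun _ => Set.univ) a A) from Set.eval_preimage,
    show ((fun y : Fin n → E => y b) ⁻¹' B) = Set.pi Set.univ
      (Function.update (fun _ => Set.univ) b B) from Set.eval_preimage,
    ← Set.pi_inter_distrib, Measure.pi_pi]
  have h : ∀ i : Fin n, μ (Function.update (fun _ => (Set.univ : Set E)) a A i ∩
      Function.update (fun _ => (Set.univ : Set E)) b B i)
      = if i = a then μ A else if i = b then μ B else 1 := by
    intro i
    by_cases h1 : i = a
    · subst h1; simp [Function.update_of_ne hab]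
    · by_cases h2 : i = b
      · subst h2; simp [Function.update_of_ne (Ne.symm hab), h1]
      · simp [Function.update_of_ne h1, Function.update_of_ne h2, h1, h2]
  rw [Finset.prod_congr rfl (fun i _ => h i),
    ← Finset.prod_subset (Finset.subset_univ {a, b}) (by
      intro x _ hx
      simp only [Finset.mem_insert, Finset.mem_singleton, not_or] at hx
      simp [hx.1, hx.2]),
    Finset.prod_pair hab]
  simp [hab, Ne.symm hab]

/-- Uniqueness of regression curves: two measurable regression curves for the same
distribution agree almost everywhere. -/
lemma regCurve_unique {Ω₁ : Type*} [MeasurableSpace Ω₁] {ν : Measure (Ω₁ × ℝ)}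
    [IsFiniteMeasure ν] {g₁ g₂ : Ω₁ → ℝ} (hg₁ : Measurable g₁) (hg₂ : Measurable g₂)
    (h₁ : IsRegCurve ν g₁) (h₂ : IsRegCurve ν g₂) :
    ∀ᵐ x ∂ν, g₁ x.1 = g₂ x.1 := by
  set ν₁ : Measure Ω₁ := ν.map Prod.fst with hν₁
  have hfin : IsFiniteMeasure ν₁ := by
    refine ⟨?_⟩
    rw [hν₁, Measure.map_apply measurable_fst MeasurableSet.univ]
    exact measure_lt_top ν _
  have key : ∀ A₁ : Set Ω₁, MeasurableSet A₁ →
      ∫ y in A₁, g₁ y ∂ν₁ = ∫ y in A₁, g₂ y ∂ν₁ := by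
    intro A₁ hA₁
    rw [hν₁, setIntegral_map hA₁ hg₁.aestronglyMeasurable measurable_fst.aemeasurable,
      setIntegral_map hA₁ hg₂.aestronglyMeasurable measurable_fst.aemeasurable,
      ← h₁.2 A₁ hA₁, ← h₂.2 A₁ hA₁]
  set B : ℕ → Set Ω₁ := fun n => {y | |g₁ y| ≤ n ∧ |g₂ y| ≤ n} with hB
  have hBmeas : ∀ n, MeasurableSet (B n) := by
    intro n
    exact (measurableSet_le hg₁.abs measurable_const).inter
      (measurableSet_le hg₂.abs measurable_const)
  have hae : ∀ n : ℕ, g₁ =ᵐ[ν₁.restrict (B n)] g₂ := by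
    intro n
    have hint : ∀ (g : Ω₁ → ℝ), Measurable g → (∀ᵐ y ∂ν₁.restrict (B n), |g y| ≤ n) →
        Integrable g (ν₁.restrict (B n)) := by
      intro g hg hbd
      refine Integrable.mono' (integrable_const (n : ℝ)) hg.aestronglyMeasurable ?_
      filter_upwards [hbd] with y hy using hy
    refine Integrable.ae_eq_of_forall_setIntegral_eq g₁ g₂
      (hint g₁ hg₁ ?_) (hint g₂ hg₂ ?_) ?_
    · filter_upwards [ae_restrict_mem (hBmeas n)] with y hy using hy.1
    · filter_upwards [ae_restrict_mem (hBmeas n)] with y hy using hy.2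
    · intro s hs _
      rw [Measure.restrict_restrict hs]
      exact key (s ∩ B n) (hs.inter (hBmeas n))
  have hDmeas : MeasurableSet {y | g₁ y ≠ g₂ y} :=
    (measurableSet_eq_fun hg₁ hg₂).compl
  have hDn : ∀ n, ν₁ ({y | g₁ y ≠ g₂ y} ∩ B n) = 0 := by
    intro n
    have := (hae n)
    rw [Filter.EventuallyEq, ae_iff, Measure.restrict_apply hDmeas] at this
    exact this
  have hsub : {y | g₁ y ≠ g₂ y} ⊆ ⋃ n, {y | g₁ y ≠ g₂ y} ∩ B n := by
    intro y hy
    obtain ⟨n, hn⟩ := exists_nat_ge (max |g₁ y| |g₂ y|)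
    exact Set.mem_iUnion.2 ⟨n, hy, le_trans (le_max_left _ _) hn,
      le_trans (le_max_right _ _) hn⟩
  have hnull : ν₁ {y | g₁ y ≠ g₂ y} = 0 :=
    le_antisymm (le_trans (measure_mono hsub) (le_of_eq (measure_iUnion_null hDn)))
      (zero_le)
  have hν₁ae : ∀ᵐ y ∂ν₁, g₁ y = g₂ y := by
    rw [ae_iff]; exact hnull
  exact ae_of_ae_map measurable_fst.aemeasurable hν₁ae

variable {Θ : Type*} [MeasurableSpace Θ]
variable (R : Kernel Θ E) [IsMarkovKernel R]
variable (Rinf : Kernel Θ (ℕ → E)) [IsMarkovKernel Rinf]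

lemma toFin_measurable (n : ℕ) : Measurable (fun (x : ℕ → E) (i : Fin n) => x i) :=
  measurable_pi_lambda _ fun i => measurable_pi_apply _

omit [IsMarkovKernel Rinf] in
lemma marg_eval (hRinf : ∀ θ n, (Rinf θ).map (fun x (i : Fin n) => x i)
      = Measure.pi fun _ : Fin n => R θ) (θ : Θ) (i : ℕ) :
    (Rinf θ).map (fun x' => x' i) = R θ := by
  ext s hs
  rw [Measure.map_apply (measurable_pi_apply i) hs]
  have hkey : (fun x' : ℕ → E => x' i) ⁻¹' s
      = (fun (x : ℕ → E) (j : Fin (i+1)) => x j) ⁻¹' ((fun y => y (Fin.last i)) ⁻¹' s) := by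
    rfl
  rw [hkey, ← Measure.map_apply (toFin_measurable (i+1))
      ((measurable_pi_apply _) hs), hRinf θ (i+1), pi_eval_preimage _ _ hs]

omit [IsMarkovKernel Rinf] in
lemma indep_eval (hRinf : ∀ θ n, (Rinf θ).map (fun x (i : Fin n) => x i)
      = Measure.pi fun _ : Fin n => R θ) (θ : Θ) {i j : ℕ} (hij : i ≠ j) :
    IndepFun (fun x' : ℕ → E => x' i) (fun x' => x' j) (Rinf θ) := by
  rw [indepFun_iff_measure_inter_preimage_eq_mul]
  intro s t hs ht
  have hi : i < max i j + 1 := Nat.lt_succ_of_le (le_max_left i j)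
  have hj : j < max i j + 1 := Nat.lt_succ_of_le (le_max_right i j)
  set n := max i j + 1
  set a : Fin n := ⟨i, hi⟩
  set b : Fin n := ⟨j, hj⟩
  have hab : a ≠ b := by
    intro h
    exact hij (by simpa [a, b, Fin.ext_iff] using h)
  have hkey : ((fun x' : ℕ → E => x' i) ⁻¹' s ∩ (fun x' : ℕ → E => x' j) ⁻¹' t)
      = (fun (x : ℕ → E) (k : Fin n) => x k) ⁻¹'
        ((fun y => y a) ⁻¹' s ∩ (fun y => y b) ⁻¹' t) := rfl
  rw [hkey, ← Measure.map_apply (toFin_measurable n)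
      (((measurable_pi_apply a) hs).inter ((measurable_pi_apply b) ht)),
    hRinf θ n, pi_eval_preimage_two _ hab hs ht]
  have h1 : (Rinf θ) ((fun x' : ℕ → E => x' i) ⁻¹' s) = R θ s := by
    rw [← Measure.map_apply (measurable_pi_apply i) hs, marg_eval R Rinf hRinf θ i]
  have h2 : (Rinf θ) ((fun x' : ℕ → E => x' j) ⁻¹' t) = R θ t := by
    rw [← Measure.map_apply (measurable_pi_apply j) ht, marg_eval R Rinf hRinf θ j]
  rw [h1, h2]

lemma slln_indicator (hRinf : ∀ θ n, (Rinf θ).map (fun x (i : Fin n) => x i)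
      = Measure.pi fun _ : Fin n => R θ) (θ : Θ) {S : Set E} (hS : MeasurableSet S) :
    ∀ᵐ x' ∂(Rinf θ),
      Filter.liminf (fun k : ℕ => ENNReal.ofReal
        ((∑ i ∈ Finset.range k, S.indicator (1 : E → ℝ) (x' i)) / k)) atTop = R θ S := by
  set f : E → ℝ := S.indicator 1 with hf
  have hfmeas : Measurable f := measurable_one.indicator hS
  have hfbd : ∀ z, |f z| ≤ 1 := by
    intro z
    by_cases h : z ∈ S <;> simp [hf, Set.indicator_apply, h]
  set X : ℕ → (ℕ → E) → ℝ := fun i x' => f (x' i) with hX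
  have hXmeas : ∀ i, Measurable (X i) := fun i => hfmeas.comp (measurable_pi_apply i)
  have hint : Integrable (X 0) (Rinf θ) := by
    refine Integrable.mono' (integrable_const (1 : ℝ)) (hXmeas 0).aestronglyMeasurable ?_
    exact Filter.Eventually.of_forall fun x' => hfbd _
  have hindep : Pairwise (Function.onFun (IndepFun · · (Rinf θ)) X) := by
    intro i j hij
    exact (indep_eval R Rinf hRinf θ hij).comp hfmeas hfmeas
  have hident : ∀ i, IdentDistrib (X i) (X 0) (Rinf θ) (Rinf θ) := by
    intro i
    refine ⟨(hXmeas i).aemeasurable, (hXmeas 0).aemeasurable, ?_⟩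
    have h1 : (Rinf θ).map (X i) = ((Rinf θ).map (fun x' => x' i)).map f := by
      rw [Measure.map_map hfmeas (measurable_pi_apply i)]; rfl
    have h2 : (Rinf θ).map (X 0) = ((Rinf θ).map (fun x' => x' 0)).map f := by
      rw [Measure.map_map hfmeas (measurable_pi_apply 0)]; rfl
    rw [h1, h2, marg_eval R Rinf hRinf θ i, marg_eval R Rinf hRinf θ 0]
  have hmean : (Rinf θ)[X 0] = (R θ S).toReal := by
    have h : ∫ z, f z ∂((Rinf θ).map (fun x' : ℕ → E => x' 0)) = ∫ x', f (x' 0) ∂(Rinf θ) := by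
      refine integral_map ?_ ?_
      · exact (measurable_pi_apply 0).aemeasurable
      · exact hfmeas.aestronglyMeasurable
    rw [marg_eval R Rinf hRinf θ 0] at h
    rw [show (Rinf θ)[X 0] = ∫ x', f (x' 0) ∂(Rinf θ) from rfl, ← h, hf,
      integral_indicator_one hS, measureReal_def]
  filter_upwards [strong_law_ae_real X hint hindep hident] with x' hx'
  rw [hmean] at hx'
  have htend : Filter.Tendsto (fun k : ℕ => ENNReal.ofReal
      ((∑ i ∈ Finset.range k, f (x' i)) / k)) atTop (𝓝 (R θ S)) := by
    have h := (ENNReal.continuous_ofReal.tendsto ((R θ S).toReal)).comp hx'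
    rw [ENNReal.ofReal_toReal (measure_ne_top _ _)] at h
    exact h
  exact htend.liminf_eq

end Helpers

/-- under the standard Borel and identifiability conditions, the regression curve
with respect to the posterior predictive distribution based on the whole infinite sample
coincides `Π_ℕ`-a.e. with the sampling regression curve. -/
theorem stmt_8 {Θ Ω₁ : Type*} [MeasurableSpace Θ] [MeasurableSpace Ω₁]
    [StandardBorelSpace Ω₁] [StandardBorelSpace Θ]
    (Q : Measure Θ) [IsProbabilityMeasure Q]
    (R : Kernel Θ (Ω₁ × ℝ)) [IsMarkovKernel R]
    (hident : Function.Injective fun θ => (R θ : Measure (Ω₁ × ℝ)))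
    (hsq : ∫⁻ θ, ∫⁻ x, ENNReal.ofReal (x.2 ^ 2) ∂(R θ) ∂Q ≠ ⊤)
    (Rinf : Kernel Θ (ℕ → Ω₁ × ℝ)) [IsMarkovKernel Rinf]
    (hRinf : ∀ θ n, (Rinf θ).map (fun x (i : Fin n) => x i) = Measure.pi fun _ : Fin n => R θ)
    (r : Θ → Ω₁ → ℝ) (hr_meas : Measurable (Function.uncurry r))
    (hr : ∀ θ, IsRegCurve (R θ) (r θ))
    (postinf : Kernel (ℕ → Ω₁ × ℝ) Θ) [IsMarkovKernel postinf]
    (hpostinf : IsPosterior Q Rinf postinf)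
    (mstarinf : (ℕ → Ω₁ × ℝ) → Ω₁ → ℝ)
    (hmstarinf_meas : Measurable (Function.uncurry mstarinf))
    (hmstarinf : ∀ x', IsRegCurve (Measure.bind (postinf x') fun θ => R θ) (mstarinf x')) :
    ∀ᵐ p ∂(PiM Q Rinf R), mstarinf p.1 p.2.1.1 = r p.2.2 p.2.1.1 := by
  classical
  -- Θ is nonempty
  have hΘne : Nonempty Θ := by
    rcases isEmpty_or_nonempty Θ with h | h
    · exfalso
      have h1 : Q Set.univ = 1 := measure_univ
      rw [Set.univ_eq_empty_iff.2 h, measure_empty] at h1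
      exact zero_ne_one h1
    · exact h
  obtain ⟨θ₀⟩ := hΘne
  haveI : Nonempty Θ := ⟨θ₀⟩
  -- a countable generating π-system on Ω₁ × ℝ
  obtain ⟨e, he⟩ := (MeasurableSpace.countable_countableGeneratingSet (α := Ω₁ × ℝ)).exists_eq_range
    (MeasurableSpace.nonempty_countableGeneratingSet)
  have hemeas : ∀ i, MeasurableSet (e i) := by
    intro i
    have hi : e i ∈ MeasurableSpace.countableGeneratingSet (Ω₁ × ℝ) := by
      rw [he]; exact ⟨i, rfl⟩
    have h2 := MeasurableSpace.measurableSet_generateFrom hi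
    rwa [MeasurableSpace.generateFrom_countableGeneratingSet] at h2
  set S : Finset ℕ → Set (Ω₁ × ℝ) := fun F => ⋂ i ∈ F, e i with hSdef
  have hSmeas : ∀ F, MeasurableSet (S F) := by
    intro F
    exact MeasurableSet.biInter (F.countable_toSet) (fun i _ => hemeas i)
  have hgen : MeasurableSpace.generateFrom (Set.range S)
      = (inferInstance : MeasurableSpace (Ω₁ × ℝ)) := by
    refine le_antisymm (MeasurableSpace.generateFrom_le ?_) ?_
    · rintro _ ⟨F, rfl⟩; exact hSmeas F
    · conv_lhs => rw [← MeasurableSpace.generateFrom_countableGeneratingSet (α := Ω₁ × ℝ)]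
      refine MeasurableSpace.generateFrom_mono ?_
      rw [he]
      rintro _ ⟨i, rfl⟩
      exact ⟨{i}, by simp [hSdef]⟩
  have hPiSys : IsPiSystem (Set.range S) := by
    rintro _ ⟨F, rfl⟩ _ ⟨G, rfl⟩ -
    refine ⟨F ∪ G, ?_⟩
    simp only [hSdef]
    ext z
    simp only [Set.mem_iInter, Finset.mem_union, Set.mem_inter_iff]
    exact ⟨fun h => ⟨fun i hi => h i (Or.inl hi), fun i hi => h i (Or.inr hi)⟩,
      fun h i hi => hi.elim (h.1 i) (h.2 i)⟩
  -- the measurable injection θ ↦ (R θ (S F))_F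
  set Fι : Θ → Finset ℕ → ℝ≥0∞ := fun θ F => R θ (S F) with hFιdef
  have hFmeas : Measurable Fι :=
    measurable_pi_lambda _ fun F => R.measurable_coe (hSmeas F)
  have hFinj : Function.Injective Fι := by
    intro θ₁ θ₂ h
    apply hident
    show (R θ₁ : Measure _) = R θ₂
    refine ext_of_generate_finite (Set.range S) hgen.symm hPiSys ?_ ?_
    · rintro _ ⟨F, rfl⟩; exact congrFun h F
    · simp
  have hFemb : MeasurableEmbedding Fι := hFmeas.measurableEmbedding hFinj
  set ψ : (Finset ℕ → ℝ≥0∞) → Θ := Function.extend Fι id (fun _ => θ₀) with hψdef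
  have hψmeas : Measurable ψ := hFemb.measurable_extend measurable_id measurable_const
  have hψF : ∀ θ, ψ (Fι θ) = θ := fun θ => hFinj.extend_apply _ _ _
  -- the empirical estimator
  set Gm : (ℕ → Ω₁ × ℝ) → Finset ℕ → ℝ≥0∞ := fun x' F =>
    Filter.liminf (fun k : ℕ => ENNReal.ofReal
      ((∑ i ∈ Finset.range k, (S F).indicator (1 : (Ω₁ × ℝ) → ℝ) (x' i)) / k)) atTop with hGmdef
  have hGmeas : Measurable Gm := by
    refine measurable_pi_lambda _ fun F => Measurable.liminf fun k => ?_
    refine ENNReal.measurable_ofReal.comp ?_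
    refine Measurable.div_const ?_ _
    refine Finset.measurable_sum _ fun i _ => ?_
    exact (measurable_one.indicator (hSmeas F)).comp (measurable_pi_apply i)
  set g : (ℕ → Ω₁ × ℝ) → Θ := fun x' => ψ (Gm x') with hgdef
  have hgmeas : Measurable g := hψmeas.comp hGmeas
  -- Doob consistency: g recovers θ almost surely
  have hgae : ∀ θ, ∀ᵐ x' ∂(Rinf θ), g x' = θ := by
    intro θ
    have h1 : ∀ᵐ x' ∂(Rinf θ), ∀ F : Finset ℕ, Gm x' F = Fι θ F := by
      rw [ae_all_iff]
      intro F
      exact slln_indicator R Rinf hRinf θ (hSmeas F)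
    filter_upwards [h1] with x' hx'
    have h2 : Gm x' = Fι θ := funext hx'
    rw [hgdef]
    simp only
    rw [h2, hψF]
  -- the prior predictive measure and the swapped joint distribution
  set M : Measure (ℕ → Ω₁ × ℝ) := Q.bind (fun θ => Rinf θ) with hMdef
  set ρ : Measure ((ℕ → Ω₁ × ℝ) × Θ) := (Q ⊗ₘ Rinf).map Prod.swap with hρdef
  haveI hρprob : IsProbabilityMeasure ρ := Measure.isProbabilityMeasure_map
    measurable_swap.aemeasurable
  have hMapply : ∀ {s : Set (ℕ → Ω₁ × ℝ)}, MeasurableSet s → M s = ∫⁻ θ, Rinf θ s ∂Q := by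
    intro s hs
    rw [hMdef, Measure.bind_apply hs Rinf.measurable.aemeasurable]
  have hρrect : ∀ {A' : Set (ℕ → Ω₁ × ℝ)} {T : Set Θ}, MeasurableSet A' → MeasurableSet T →
      ρ (A' ×ˢ T) = ∫⁻ θ in T, Rinf θ A' ∂Q := by
    intro A' T hA' hT
    rw [hρdef, Measure.map_apply measurable_swap (hA'.prod hT)]
    rw [Set.preimage_swap_prod, Measure.compProd_apply_prod hT hA']
  have hρfst : ρ.fst = M := by
    ext s hs
    rw [Measure.fst_apply hs, hMapply hs]
    have h : (Prod.fst ⁻¹' s : Set ((ℕ → Ω₁ × ℝ) × Θ)) = s ×ˢ Set.univ := by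
      ext p; simp
    rw [h, hρrect hs MeasurableSet.univ, Measure.restrict_univ]
  haveI : IsProbabilityMeasure M := by rw [← hρfst]; infer_instance
  -- ρ disintegrates with respect to both `postinf` and `δ_{g ·}`
  have hclaim1 : ρ = ρ.fst ⊗ₘ postinf := by
    rw [hρfst]
    refine ext_of_generate_finite _ generateFrom_prod.symm isPiSystem_prod ?_ ?_
    · rintro _ ⟨A', hA', T, hT, rfl⟩
      simp only [Set.mem_setOf_eq] at hA' hT
      rw [Measure.compProd_apply_prod hA' hT, hρrect hA' hT]
      exact hpostinf A' T hA' hT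
    · simp
  have hclaim2 : ρ = ρ.fst ⊗ₘ Kernel.deterministic g hgmeas := by
    rw [hρfst]
    refine ext_of_generate_finite _ generateFrom_prod.symm isPiSystem_prod ?_ ?_
    · rintro _ ⟨A', hA', T, hT, rfl⟩
      simp only [Set.mem_setOf_eq] at hA' hT
      rw [Measure.compProd_apply_prod hA' hT, hρrect hA' hT]
      have hstep : ∀ x', Kernel.deterministic g hgmeas x' T
          = Set.indicator (g ⁻¹' T) (fun _ => (1:ℝ≥0∞)) x' := by
        intro x'
        rw [Kernel.deterministic_apply' hgmeas _ hT]
        by_cases h : g x' ∈ T <;> simp [Set.indicator_apply, h]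
      calc ∫⁻ θ in T, Rinf θ A' ∂Q
          = ∫⁻ θ, T.indicator (fun θ => Rinf θ A') θ ∂Q := by
            rw [lintegral_indicator hT]
        _ = ∫⁻ θ, Rinf θ (g ⁻¹' T ∩ A') ∂Q := by
            refine lintegral_congr fun θ => ?_
            by_cases hθT : θ ∈ T
            · have hsets : (g ⁻¹' T ∩ A' : Set _) =ᵐ[Rinf θ] (A' : Set _) := by
                rw [Filter.eventuallyEq_set]
                filter_upwards [hgae θ] with x' hx'
                simp [hx', hθT]
              rw [Set.indicator_of_mem hθT, measure_congr hsets]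
            · have hsets : (g ⁻¹' T ∩ A' : Set _) =ᵐ[Rinf θ] (∅ : Set _) := by
                rw [Filter.eventuallyEq_set]
                filter_upwards [hgae θ] with x' hx'
                simp [hx', hθT]
              rw [Set.indicator_of_notMem hθT, measure_congr hsets, measure_empty]
        _ = M (g ⁻¹' T ∩ A') := (hMapply ((hgmeas hT).inter hA')).symm
        _ = ∫⁻ x' in A', Kernel.deterministic g hgmeas x' T ∂M := by
            rw [← Measure.restrict_apply (hgmeas hT)]
            rw [← lintegral_indicator_one (hgmeas hT)]
            refine lintegral_congr fun x' => ?_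
            rw [hstep x']
            rfl
    · simp
  have hpostae : ∀ᵐ x' ∂M, postinf x' = Measure.dirac (g x') := by
    have ha := eq_condKernel_of_measure_eq_compProd postinf hclaim1
    have hb := eq_condKernel_of_measure_eq_compProd (Kernel.deterministic g hgmeas) hclaim2
    rw [hρfst] at ha hb
    filter_upwards [ha, hb] with x' h1' h2'
    rw [h1', ← h2', Kernel.deterministic_apply]
  -- transfer along the compProd
  have hMmap : M = (Q ⊗ₘ Rinf).map Prod.snd := by
    ext s hs
    rw [hMapply hs, Measure.map_apply measurable_snd hs]
    have h : (Prod.snd ⁻¹' s : Set (Θ × (ℕ → Ω₁ × ℝ))) = Set.univ ×ˢ s := by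
      ext p; simp
    rw [h, Measure.compProd_apply_prod MeasurableSet.univ hs, Measure.restrict_univ]
  have hpost2 : ∀ᵐ p ∂(Q ⊗ₘ Rinf), postinf p.2 = Measure.dirac (g p.2) := by
    rw [hMmap] at hpostae
    exact ae_of_ae_map measurable_snd.aemeasurable hpostae
  have hpost3 : ∀ᵐ θ ∂Q, ∀ᵐ x' ∂(Rinf θ), postinf x' = Measure.dirac (g x') :=
    Measure.ae_ae_of_ae_compProd hpost2
  -- final assembly
  have hm1 : Measurable fun p : (ℕ → Ω₁ × ℝ) × (Ω₁ × ℝ) × Θ => mstarinf p.1 p.2.1.1 :=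
    hmstarinf_meas.comp (measurable_fst.prodMk (measurable_fst.comp
      (measurable_fst.comp measurable_snd)))
  have hm2 : Measurable fun p : (ℕ → Ω₁ × ℝ) × (Ω₁ × ℝ) × Θ => r p.2.2 p.2.1.1 :=
    hr_meas.comp ((measurable_snd.comp measurable_snd).prodMk
      (measurable_fst.comp (measurable_fst.comp measurable_snd)))
  have hPmeas : MeasurableSet {p : (ℕ → Ω₁ × ℝ) × (Ω₁ × ℝ) × Θ |
      mstarinf p.1 p.2.1.1 = r p.2.2 p.2.1.1} := measurableSet_eq_fun hm1 hm2
  have hφmeas : Measurable fun p : Θ × ((ℕ → Ω₁ × ℝ) × (Ω₁ × ℝ)) =>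
      (p.2.1, p.2.2, p.1) :=
    (measurable_fst.comp measurable_snd).prodMk
      ((measurable_snd.comp measurable_snd).prodMk measurable_fst)
  rw [PiM, ae_map_iff hφmeas.aemeasurable hPmeas]
  refine Measure.ae_compProd_of_ae_ae ?_ ?_
  · exact measurableSet_eq_fun
      (hmstarinf_meas.comp ((measurable_fst.comp measurable_snd).prodMk
        (measurable_fst.comp (measurable_snd.comp measurable_snd))))
      (hr_meas.comp (measurable_fst.prodMk
        (measurable_fst.comp (measurable_snd.comp measurable_snd))))
  filter_upwards [hpost3] with θ hθ
  rw [Kernel.prod_apply]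
  have hbadmeas : MeasurableSet {y : (ℕ → Ω₁ × ℝ) × (Ω₁ × ℝ) |
      ¬ mstarinf y.1 y.2.1 = r θ y.2.1} := by
    refine (measurableSet_eq_fun ?_ ?_).compl
    · exact hmstarinf_meas.comp (measurable_fst.prodMk
        (measurable_fst.comp measurable_snd))
    · exact (hr_meas.comp (measurable_prodMk_left (x := θ))).comp
        (measurable_fst.comp measurable_snd)
  rw [ae_iff, Measure.measure_prod_null hbadmeas]
  filter_upwards [hθ, hgae θ] with x' hx'post hx'g
  have hbind : (Measure.bind (postinf x') fun θ' => R θ') = R θ := by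
    rw [hx'post, hx'g, Measure.dirac_bind R.measurable]
  have hreg1 : IsRegCurve (R θ) (mstarinf x') := hbind ▸ hmstarinf x'
  have hmeas1 : Measurable (mstarinf x') :=
    hmstarinf_meas.comp (measurable_prodMk_left (x := x'))
  have hmeas2 : Measurable (r θ) := hr_meas.comp (measurable_prodMk_left (x := θ))
  have hae := regCurve_unique hmeas1 hmeas2 hreg1 (hr θ)
  rw [ae_iff] at hae
  simpa using hae
end
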